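/- arXiv:0903.5149 — 3 statements merged into one kernel-verified Lean document; each statement's English description precedes it below -/
import Mathlib

section
/- For all vectors p₁,…,p₆ ∈ k³, one has Q(p₁,…,p₆) = 0 if and only if there exists a nonzero homogeneous polynomial q ∈ k[X₀,X₁,X₂] of degree 2 with q(pᵢ) = 0 for all i = 1,…,6 (i.e. the six points lie on a conic). Moreover Q is skew-symmetric: for every permutation σ of {1,…,6}, Q(p_{σ(1)},…,p_{σ(6)}) = sign(σ)·Q(p₁,…,p₆). -/
open MvPolynomial

/-- The determinant of the 3×3 matrix with rows `a`, `b`, `c`. -/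
noncomputable def det3 {R : Type*} [CommRing R] (a b c : Fin 3 → R) : R :=
  Matrix.det (Matrix.of ![a, b, c])

/-- Coble's invariant `Q(p₁,…,p₆) = [134][156][235][246] − [135][146][234][256]`. -/
noncomputable def cobleQ {k : Type*} [Field k] (p : Fin 6 → Fin 3 → k) : k :=
  det3 (p 0) (p 2) (p 3) * det3 (p 0) (p 4) (p 5) *
      det3 (p 1) (p 2) (p 4) * det3 (p 1) (p 3) (p 5) -
    det3 (p 0) (p 2) (p 4) * det3 (p 0) (p 3) (p 5) *
      det3 (p 1) (p 2) (p 3) * det3 (p 1) (p 4) (p 5)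

set_option maxHeartbeats 10000000
set_option maxRecDepth 10000

def mrow {k : Type*} [CommRing k] (x : Fin 3 → k) : Fin 6 → k :=
  ![x 0 ^ 2, x 1 ^ 2, x 2 ^ 2, x 0 * x 1, x 0 * x 2, x 1 * x 2]

noncomputable def monMat {k : Type*} [Field k] (p : Fin 6 → Fin 3 → k) :
    Matrix (Fin 6) (Fin 6) k := Matrix.of fun i j => mrow (p i) j

theorem sa4_0_0 : Fin.succAbove (0 : Fin 4) (0 : Fin 3) = 1 := by decide
theorem sa4_0_1 : Fin.succAbove (0 : Fin 4) (1 : Fin 3) = 2 := by decide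
theorem sa4_0_2 : Fin.succAbove (0 : Fin 4) (2 : Fin 3) = 3 := by decide
theorem sa4_1_0 : Fin.succAbove (1 : Fin 4) (0 : Fin 3) = 0 := by decide
theorem sa4_1_1 : Fin.succAbove (1 : Fin 4) (1 : Fin 3) = 2 := by decide
theorem sa4_1_2 : Fin.succAbove (1 : Fin 4) (2 : Fin 3) = 3 := by decide
theorem sa4_2_0 : Fin.succAbove (2 : Fin 4) (0 : Fin 3) = 0 := by decide
theorem sa4_2_1 : Fin.succAbove (2 : Fin 4) (1 : Fin 3) = 1 := by decide
theorem sa4_2_2 : Fin.succAbove (2 : Fin 4) (2 : Fin 3) = 3 := by decide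
theorem sa4_3_0 : Fin.succAbove (3 : Fin 4) (0 : Fin 3) = 0 := by decide
theorem sa4_3_1 : Fin.succAbove (3 : Fin 4) (1 : Fin 3) = 1 := by decide
theorem sa4_3_2 : Fin.succAbove (3 : Fin 4) (2 : Fin 3) = 2 := by decide
theorem sa5_0_0 : Fin.succAbove (0 : Fin 5) (0 : Fin 4) = 1 := by decide
theorem sa5_0_1 : Fin.succAbove (0 : Fin 5) (1 : Fin 4) = 2 := by decide
theorem sa5_0_2 : Fin.succAbove (0 : Fin 5) (2 : Fin 4) = 3 := by decide
theorem sa5_0_3 : Fin.succAbove (0 : Fin 5) (3 : Fin 4) = 4 := by decide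
theorem sa5_1_0 : Fin.succAbove (1 : Fin 5) (0 : Fin 4) = 0 := by decide
theorem sa5_1_1 : Fin.succAbove (1 : Fin 5) (1 : Fin 4) = 2 := by decide
theorem sa5_1_2 : Fin.succAbove (1 : Fin 5) (2 : Fin 4) = 3 := by decide
theorem sa5_1_3 : Fin.succAbove (1 : Fin 5) (3 : Fin 4) = 4 := by decide
theorem sa5_2_0 : Fin.succAbove (2 : Fin 5) (0 : Fin 4) = 0 := by decide
theorem sa5_2_1 : Fin.succAbove (2 : Fin 5) (1 : Fin 4) = 1 := by decide
theorem sa5_2_2 : Fin.succAbove (2 : Fin 5) (2 : Fin 4) = 3 := by decide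
theorem sa5_2_3 : Fin.succAbove (2 : Fin 5) (3 : Fin 4) = 4 := by decide
theorem sa5_3_0 : Fin.succAbove (3 : Fin 5) (0 : Fin 4) = 0 := by decide
theorem sa5_3_1 : Fin.succAbove (3 : Fin 5) (1 : Fin 4) = 1 := by decide
theorem sa5_3_2 : Fin.succAbove (3 : Fin 5) (2 : Fin 4) = 2 := by decide
theorem sa5_3_3 : Fin.succAbove (3 : Fin 5) (3 : Fin 4) = 4 := by decide
theorem sa5_4_0 : Fin.succAbove (4 : Fin 5) (0 : Fin 4) = 0 := by decide
theorem sa5_4_1 : Fin.succAbove (4 : Fin 5) (1 : Fin 4) = 1 := by decide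
theorem sa5_4_2 : Fin.succAbove (4 : Fin 5) (2 : Fin 4) = 2 := by decide
theorem sa5_4_3 : Fin.succAbove (4 : Fin 5) (3 : Fin 4) = 3 := by decide
theorem sa6_0_0 : Fin.succAbove (0 : Fin 6) (0 : Fin 5) = 1 := by decide
theorem sa6_0_1 : Fin.succAbove (0 : Fin 6) (1 : Fin 5) = 2 := by decide
theorem sa6_0_2 : Fin.succAbove (0 : Fin 6) (2 : Fin 5) = 3 := by decide
theorem sa6_0_3 : Fin.succAbove (0 : Fin 6) (3 : Fin 5) = 4 := by decide
theorem sa6_0_4 : Fin.succAbove (0 : Fin 6) (4 : Fin 5) = 5 := by decide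
theorem sa6_1_0 : Fin.succAbove (1 : Fin 6) (0 : Fin 5) = 0 := by decide
theorem sa6_1_1 : Fin.succAbove (1 : Fin 6) (1 : Fin 5) = 2 := by decide
theorem sa6_1_2 : Fin.succAbove (1 : Fin 6) (2 : Fin 5) = 3 := by decide
theorem sa6_1_3 : Fin.succAbove (1 : Fin 6) (3 : Fin 5) = 4 := by decide
theorem sa6_1_4 : Fin.succAbove (1 : Fin 6) (4 : Fin 5) = 5 := by decide
theorem sa6_2_0 : Fin.succAbove (2 : Fin 6) (0 : Fin 5) = 0 := by decide
theorem sa6_2_1 : Fin.succAbove (2 : Fin 6) (1 : Fin 5) = 1 := by decide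
theorem sa6_2_2 : Fin.succAbove (2 : Fin 6) (2 : Fin 5) = 3 := by decide
theorem sa6_2_3 : Fin.succAbove (2 : Fin 6) (3 : Fin 5) = 4 := by decide
theorem sa6_2_4 : Fin.succAbove (2 : Fin 6) (4 : Fin 5) = 5 := by decide
theorem sa6_3_0 : Fin.succAbove (3 : Fin 6) (0 : Fin 5) = 0 := by decide
theorem sa6_3_1 : Fin.succAbove (3 : Fin 6) (1 : Fin 5) = 1 := by decide
theorem sa6_3_2 : Fin.succAbove (3 : Fin 6) (2 : Fin 5) = 2 := by decide
theorem sa6_3_3 : Fin.succAbove (3 : Fin 6) (3 : Fin 5) = 4 := by decide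
theorem sa6_3_4 : Fin.succAbove (3 : Fin 6) (4 : Fin 5) = 5 := by decide
theorem sa6_4_0 : Fin.succAbove (4 : Fin 6) (0 : Fin 5) = 0 := by decide
theorem sa6_4_1 : Fin.succAbove (4 : Fin 6) (1 : Fin 5) = 1 := by decide
theorem sa6_4_2 : Fin.succAbove (4 : Fin 6) (2 : Fin 5) = 2 := by decide
theorem sa6_4_3 : Fin.succAbove (4 : Fin 6) (3 : Fin 5) = 3 := by decide
theorem sa6_4_4 : Fin.succAbove (4 : Fin 6) (4 : Fin 5) = 5 := by decide
theorem sa6_5_0 : Fin.succAbove (5 : Fin 6) (0 : Fin 5) = 0 := by decide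
theorem sa6_5_1 : Fin.succAbove (5 : Fin 6) (1 : Fin 5) = 1 := by decide
theorem sa6_5_2 : Fin.succAbove (5 : Fin 6) (2 : Fin 5) = 2 := by decide
theorem sa6_5_3 : Fin.succAbove (5 : Fin 6) (3 : Fin 5) = 3 := by decide
theorem sa6_5_4 : Fin.succAbove (5 : Fin 6) (4 : Fin 5) = 4 := by decide
theorem sc1_0 : Fin.succ (0 : Fin 1) = 1 := by decide
theorem sc2_0 : Fin.succ (0 : Fin 2) = 1 := by decide
theorem sc2_1 : Fin.succ (1 : Fin 2) = 2 := by decide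
theorem sc3_0 : Fin.succ (0 : Fin 3) = 1 := by decide
theorem sc3_1 : Fin.succ (1 : Fin 3) = 2 := by decide
theorem sc3_2 : Fin.succ (2 : Fin 3) = 3 := by decide
theorem sc4_0 : Fin.succ (0 : Fin 4) = 1 := by decide
theorem sc4_1 : Fin.succ (1 : Fin 4) = 2 := by decide
theorem sc4_2 : Fin.succ (2 : Fin 4) = 3 := by decide
theorem sc4_3 : Fin.succ (3 : Fin 4) = 4 := by decide
theorem sc5_0 : Fin.succ (0 : Fin 5) = 1 := by decide
theorem sc5_1 : Fin.succ (1 : Fin 5) = 2 := by decide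
theorem sc5_2 : Fin.succ (2 : Fin 5) = 3 := by decide
theorem sc5_3 : Fin.succ (3 : Fin 5) = 4 := by decide
theorem sc5_4 : Fin.succ (4 : Fin 5) = 5 := by decide
theorem detFin4 {R : Type*} [CommRing R] (A : Matrix (Fin 4) (Fin 4) R) :
    A.det = ((((A 0 0*A 1 1*A 2 2*A 3 3 + ((-(A 0 0*A 1 1*A 2 3*A 3 2)) + (-(A 0 0*A 1 2*A 2 1*A 3 3)))) + (A 0 0*A 1 2*A
      2 3*A 3 1 + (A 0 0*A 1 3*A 2 1*A 3 2 + (-(A 0 0*A 1 3*A 2 2*A 3 1))))) + (((-(A 0 1*A 1 0*A 2 2*A 3 3)) + (A 0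
      1*A 1 0*A 2 3*A 3 2 + A 0 1*A 1 2*A 2 0*A 3 3)) + ((-(A 0 1*A 1 2*A 2 3*A 3 0)) + ((-(A 0 1*A 1 3*A 2 0*A 3
      2)) + A 0 1*A 1 3*A 2 2*A 3 0)))) + (((A 0 2*A 1 0*A 2 1*A 3 3 + ((-(A 0 2*A 1 0*A 2 3*A 3 1)) + (-(A 0 2*A 1
      1*A 2 0*A 3 3)))) + (A 0 2*A 1 1*A 2 3*A 3 0 + (A 0 2*A 1 3*A 2 0*A 3 1 + (-(A 0 2*A 1 3*A 2 1*A 3 0))))) +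
      (((-(A 0 3*A 1 0*A 2 1*A 3 2)) + (A 0 3*A 1 0*A 2 2*A 3 1 + A 0 3*A 1 1*A 2 0*A 3 2)) + ((-(A 0 3*A 1 1*A 2
      2*A 3 0)) + ((-(A 0 3*A 1 2*A 2 0*A 3 1)) + A 0 3*A 1 2*A 2 1*A 3 0))))) := by
  rw [Matrix.det_succ_row_zero]
  simp only [Fin.sum_univ_succ, Matrix.det_fin_three, Matrix.submatrix_apply,
    Finset.univ_unique, Finset.sum_singleton, Fin.default_eq_zero, Fin.val_zero, Fin.val_succ,
    pow_succ, pow_zero, sa4_0_0, sa4_0_1, sa4_0_2, sa4_1_0, sa4_1_1, sa4_1_2, sa4_2_0, sa4_2_1, sa4_2_2, sa4_3_0, sa4_3_1, sa4_3_2, sa5_0_0, sa5_0_1, sa5_0_2, sa5_0_3, sa5_1_0, sa5_1_1, sa5_1_2, sa5_1_3, sa5_2_0, sa5_2_1, sa5_2_2, sa5_2_3, sa5_3_0, sa5_3_1, sa5_3_2, sa5_3_3, sa5_4_0, sa5_4_1, sa5_4_2, sa5_4_3, sa6_0_0, sa6_0_1, sa6_0_2, sa6_0_3, sa6_0_4,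 sa6_1_0, sa6_1_1, sa6_1_2, sa6_1_3, sa6_1_4, sa6_2_0, sa6_2_1, sa6_2_2, sa6_2_3, sa6_2_4, sa6_3_0, sa6_3_1, sa6_3_2, sa6_3_3, sa6_3_4, sa6_4_0, sa6_4_1, sa6_4_2, sa6_4_3, sa6_4_4, sa6_5_0, sa6_5_1, sa6_5_2, sa6_5_3, sa6_5_4, sc1_0, sc2_0, sc2_1, sc3_0, sc3_1, sc3_2, sc4_0, sc4_1, sc4_2, sc4_3, sc5_0, sc5_1, sc5_2, sc5_3, sc5_4]
  ring

theorem detFin5 {R : Type*} [CommRing R] (A : Matrix (Fin 5) (Fin 5) R) :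
    A.det = ((((((A 0 0*A 1 1*A 2 2*A 3 3*A 4 4 + ((-(A 0 0*A 1 1*A 2 2*A 3 4*A 4 3)) + (-(A 0 0*A 1 1*A 2 3*A 3 2*A 4
      4)))) + ((A 0 0*A 1 1*A 2 3*A 3 4*A 4 2 + A 0 0*A 1 1*A 2 4*A 3 2*A 4 3) + ((-(A 0 0*A 1 1*A 2 4*A 3 3*A 4 2))
      + (-(A 0 0*A 1 2*A 2 1*A 3 3*A 4 4))))) + (((A 0 0*A 1 2*A 2 1*A 3 4*A 4 3 + A 0 0*A 1 2*A 2 3*A 3 1*A 4 4) +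
      ((-(A 0 0*A 1 2*A 2 3*A 3 4*A 4 1)) + (-(A 0 0*A 1 2*A 2 4*A 3 1*A 4 3)))) + ((A 0 0*A 1 2*A 2 4*A 3 3*A 4 1 +
      A 0 0*A 1 3*A 2 1*A 3 2*A 4 4) + ((-(A 0 0*A 1 3*A 2 1*A 3 4*A 4 2)) + (-(A 0 0*A 1 3*A 2 2*A 3 1*A 4 4))))))
      + (((A 0 0*A 1 3*A 2 2*A 3 4*A 4 1 + (A 0 0*A 1 3*A 2 4*A 3 1*A 4 2 + (-(A 0 0*A 1 3*A 2 4*A 3 2*A 4 1)))) +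
      (((-(A 0 0*A 1 4*A 2 1*A 3 2*A 4 3)) + A 0 0*A 1 4*A 2 1*A 3 3*A 4 2) + (A 0 0*A 1 4*A 2 2*A 3 1*A 4 3 + (-(A
      0 0*A 1 4*A 2 2*A 3 3*A 4 1))))) + ((((-(A 0 0*A 1 4*A 2 3*A 3 1*A 4 2)) + A 0 0*A 1 4*A 2 3*A 3 2*A 4 1) +
      ((-(A 0 1*A 1 0*A 2 2*A 3 3*A 4 4)) + A 0 1*A 1 0*A 2 2*A 3 4*A 4 3)) + ((A 0 1*A 1 0*A 2 3*A 3 2*A 4 4 + (-(A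
      0 1*A 1 0*A 2 3*A 3 4*A 4 2))) + ((-(A 0 1*A 1 0*A 2 4*A 3 2*A 4 3)) + A 0 1*A 1 0*A 2 4*A 3 3*A 4 2))))) +
      ((((A 0 1*A 1 2*A 2 0*A 3 3*A 4 4 + ((-(A 0 1*A 1 2*A 2 0*A 3 4*A 4 3)) + (-(A 0 1*A 1 2*A 2 3*A 3 0*A 4 4))))
      + ((A 0 1*A 1 2*A 2 3*A 3 4*A 4 0 + A 0 1*A 1 2*A 2 4*A 3 0*A 4 3) + ((-(A 0 1*A 1 2*A 2 4*A 3 3*A 4 0)) +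
      (-(A 0 1*A 1 3*A 2 0*A 3 2*A 4 4))))) + (((A 0 1*A 1 3*A 2 0*A 3 4*A 4 2 + A 0 1*A 1 3*A 2 2*A 3 0*A 4 4) +
      ((-(A 0 1*A 1 3*A 2 2*A 3 4*A 4 0)) + (-(A 0 1*A 1 3*A 2 4*A 3 0*A 4 2)))) + ((A 0 1*A 1 3*A 2 4*A 3 2*A 4 0 +
      A 0 1*A 1 4*A 2 0*A 3 2*A 4 3) + ((-(A 0 1*A 1 4*A 2 0*A 3 3*A 4 2)) + (-(A 0 1*A 1 4*A 2 2*A 3 0*A 4 3))))))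
      + (((A 0 1*A 1 4*A 2 2*A 3 3*A 4 0 + (A 0 1*A 1 4*A 2 3*A 3 0*A 4 2 + (-(A 0 1*A 1 4*A 2 3*A 3 2*A 4 0)))) +
      ((A 0 2*A 1 0*A 2 1*A 3 3*A 4 4 + (-(A 0 2*A 1 0*A 2 1*A 3 4*A 4 3))) + ((-(A 0 2*A 1 0*A 2 3*A 3 1*A 4 4)) +
      A 0 2*A 1 0*A 2 3*A 3 4*A 4 1))) + (((A 0 2*A 1 0*A 2 4*A 3 1*A 4 3 + (-(A 0 2*A 1 0*A 2 4*A 3 3*A 4 1))) +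
      ((-(A 0 2*A 1 1*A 2 0*A 3 3*A 4 4)) + A 0 2*A 1 1*A 2 0*A 3 4*A 4 3)) + ((A 0 2*A 1 1*A 2 3*A 3 0*A 4 4 + (-(A
      0 2*A 1 1*A 2 3*A 3 4*A 4 0))) + ((-(A 0 2*A 1 1*A 2 4*A 3 0*A 4 3)) + A 0 2*A 1 1*A 2 4*A 3 3*A 4 0)))))) +
      (((((A 0 2*A 1 3*A 2 0*A 3 1*A 4 4 + ((-(A 0 2*A 1 3*A 2 0*A 3 4*A 4 1)) + (-(A 0 2*A 1 3*A 2 1*A 3 0*A 4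
      4)))) + ((A 0 2*A 1 3*A 2 1*A 3 4*A 4 0 + A 0 2*A 1 3*A 2 4*A 3 0*A 4 1) + ((-(A 0 2*A 1 3*A 2 4*A 3 1*A 4 0))
      + (-(A 0 2*A 1 4*A 2 0*A 3 1*A 4 3))))) + (((A 0 2*A 1 4*A 2 0*A 3 3*A 4 1 + A 0 2*A 1 4*A 2 1*A 3 0*A 4 3) +
      ((-(A 0 2*A 1 4*A 2 1*A 3 3*A 4 0)) + (-(A 0 2*A 1 4*A 2 3*A 3 0*A 4 1)))) + ((A 0 2*A 1 4*A 2 3*A 3 1*A 4 0 +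
      (-(A 0 3*A 1 0*A 2 1*A 3 2*A 4 4))) + (A 0 3*A 1 0*A 2 1*A 3 4*A 4 2 + A 0 3*A 1 0*A 2 2*A 3 1*A 4 4)))) +
      ((((-(A 0 3*A 1 0*A 2 2*A 3 4*A 4 1)) + ((-(A 0 3*A 1 0*A 2 4*A 3 1*A 4 2)) + A 0 3*A 1 0*A 2 4*A 3 2*A 4 1))
      + ((A 0 3*A 1 1*A 2 0*A 3 2*A 4 4 + (-(A 0 3*A 1 1*A 2 0*A 3 4*A 4 2))) + ((-(A 0 3*A 1 1*A 2 2*A 3 0*A 4 4))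
      + A 0 3*A 1 1*A 2 2*A 3 4*A 4 0))) + (((A 0 3*A 1 1*A 2 4*A 3 0*A 4 2 + (-(A 0 3*A 1 1*A 2 4*A 3 2*A 4 0))) +
      ((-(A 0 3*A 1 2*A 2 0*A 3 1*A 4 4)) + A 0 3*A 1 2*A 2 0*A 3 4*A 4 1)) + ((A 0 3*A 1 2*A 2 1*A 3 0*A 4 4 + (-(A
      0 3*A 1 2*A 2 1*A 3 4*A 4 0))) + ((-(A 0 3*A 1 2*A 2 4*A 3 0*A 4 1)) + A 0 3*A 1 2*A 2 4*A 3 1*A 4 0))))) +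
      ((((A 0 3*A 1 4*A 2 0*A 3 1*A 4 2 + ((-(A 0 3*A 1 4*A 2 0*A 3 2*A 4 1)) + (-(A 0 3*A 1 4*A 2 1*A 3 0*A 4 2))))
      + ((A 0 3*A 1 4*A 2 1*A 3 2*A 4 0 + A 0 3*A 1 4*A 2 2*A 3 0*A 4 1) + ((-(A 0 3*A 1 4*A 2 2*A 3 1*A 4 0)) + A 0
      4*A 1 0*A 2 1*A 3 2*A 4 3))) + ((((-(A 0 4*A 1 0*A 2 1*A 3 3*A 4 2)) + (-(A 0 4*A 1 0*A 2 2*A 3 1*A 4 3))) +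
      (A 0 4*A 1 0*A 2 2*A 3 3*A 4 1 + A 0 4*A 1 0*A 2 3*A 3 1*A 4 2)) + (((-(A 0 4*A 1 0*A 2 3*A 3 2*A 4 1)) + (-(A
      0 4*A 1 1*A 2 0*A 3 2*A 4 3))) + (A 0 4*A 1 1*A 2 0*A 3 3*A 4 2 + A 0 4*A 1 1*A 2 2*A 3 0*A 4 3)))) + ((((-(A
      0 4*A 1 1*A 2 2*A 3 3*A 4 0)) + ((-(A 0 4*A 1 1*A 2 3*A 3 0*A 4 2)) + A 0 4*A 1 1*A 2 3*A 3 2*A 4 0)) + ((A 0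
      4*A 1 2*A 2 0*A 3 1*A 4 3 + (-(A 0 4*A 1 2*A 2 0*A 3 3*A 4 1))) + ((-(A 0 4*A 1 2*A 2 1*A 3 0*A 4 3)) + A 0
      4*A 1 2*A 2 1*A 3 3*A 4 0))) + (((A 0 4*A 1 2*A 2 3*A 3 0*A 4 1 + (-(A 0 4*A 1 2*A 2 3*A 3 1*A 4 0))) + ((-(A
      0 4*A 1 3*A 2 0*A 3 1*A 4 2)) + A 0 4*A 1 3*A 2 0*A 3 2*A 4 1)) + ((A 0 4*A 1 3*A 2 1*A 3 0*A 4 2 + (-(A 0 4*A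
      1 3*A 2 1*A 3 2*A 4 0))) + ((-(A 0 4*A 1 3*A 2 2*A 3 0*A 4 1)) + A 0 4*A 1 3*A 2 2*A 3 1*A 4 0))))))) := by
  rw [Matrix.det_succ_row_zero]
  simp only [Fin.sum_univ_succ, detFin4, Matrix.submatrix_apply,
    Finset.univ_unique, Finset.sum_singleton, Fin.default_eq_zero, Fin.val_zero, Fin.val_succ,
    pow_succ, pow_zero, sa4_0_0, sa4_0_1, sa4_0_2, sa4_1_0, sa4_1_1, sa4_1_2, sa4_2_0, sa4_2_1, sa4_2_2, sa4_3_0, sa4_3_1, sa4_3_2, sa5_0_0, sa5_0_1, sa5_0_2, sa5_0_3, sa5_1_0, sa5_1_1, sa5_1_2, sa5_1_3, sa5_2_0, sa5_2_1, sa5_2_2, sa5_2_3, sa5_3_0, sa5_3_1, sa5_3_2, sa5_3_3, sa5_4_0, sa5_4_1, sa5_4_2, sa5_4_3, sa6_0_0, sa6_0_1, sa6_0_2, sa6_0_3, sa6_0_4, sa6_1_0, sa6_1_1, sa6_1_2, sa6_1_3, sa6_1_4, sa6_2_0, sa6_2_1, sa6_2_2, sa6_2_3, sa6_2_4, sa6_3_0,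 sa6_3_1, sa6_3_2, sa6_3_3, sa6_3_4, sa6_4_0, sa6_4_1, sa6_4_2, sa6_4_3, sa6_4_4, sa6_5_0, sa6_5_1, sa6_5_2, sa6_5_3, sa6_5_4, sc1_0, sc2_0, sc2_1, sc3_0, sc3_1, sc3_2, sc4_0, sc4_1, sc4_2, sc4_3, sc5_0, sc5_1, sc5_2, sc5_3, sc5_4]
  ring

theorem detFin6 {R : Type*} [CommRing R] (A : Matrix (Fin 6) (Fin 6) R) :
    A.det = (((((((((A 0 0*A 1 1*A 2 2*A 3 3*A 4 4*A 5 5 + (-(A 0 0*A 1 1*A 2 2*A 3 3*A 4 5*A 5 4))) + ((-(A 0 0*A 1 1*A 2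
      2*A 3 4*A 4 3*A 5 5)) + (A 0 0*A 1 1*A 2 2*A 3 4*A 4 5*A 5 3 + A 0 0*A 1 1*A 2 2*A 3 5*A 4 3*A 5 4))) + (((-(A
      0 0*A 1 1*A 2 2*A 3 5*A 4 4*A 5 3)) + ((-(A 0 0*A 1 1*A 2 3*A 3 2*A 4 4*A 5 5)) + A 0 0*A 1 1*A 2 3*A 3 2*A 4
      5*A 5 4)) + (A 0 0*A 1 1*A 2 3*A 3 4*A 4 2*A 5 5 + ((-(A 0 0*A 1 1*A 2 3*A 3 4*A 4 5*A 5 2)) + (-(A 0 0*A 1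
      1*A 2 3*A 3 5*A 4 2*A 5 4)))))) + (((A 0 0*A 1 1*A 2 3*A 3 5*A 4 4*A 5 2 + A 0 0*A 1 1*A 2 4*A 3 2*A 4 3*A 5
      5) + ((-(A 0 0*A 1 1*A 2 4*A 3 2*A 4 5*A 5 3)) + ((-(A 0 0*A 1 1*A 2 4*A 3 3*A 4 2*A 5 5)) + A 0 0*A 1 1*A 2
      4*A 3 3*A 4 5*A 5 2))) + ((A 0 0*A 1 1*A 2 4*A 3 5*A 4 2*A 5 3 + ((-(A 0 0*A 1 1*A 2 4*A 3 5*A 4 3*A 5 2)) +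
      (-(A 0 0*A 1 1*A 2 5*A 3 2*A 4 3*A 5 4)))) + (A 0 0*A 1 1*A 2 5*A 3 2*A 4 4*A 5 3 + (A 0 0*A 1 1*A 2 5*A 3 3*A
      4 2*A 5 4 + (-(A 0 0*A 1 1*A 2 5*A 3 3*A 4 4*A 5 2))))))) + (((((-(A 0 0*A 1 1*A 2 5*A 3 4*A 4 2*A 5 3)) + A 0
      0*A 1 1*A 2 5*A 3 4*A 4 3*A 5 2) + ((-(A 0 0*A 1 2*A 2 1*A 3 3*A 4 4*A 5 5)) + (A 0 0*A 1 2*A 2 1*A 3 3*A 4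
      5*A 5 4 + A 0 0*A 1 2*A 2 1*A 3 4*A 4 3*A 5 5))) + (((-(A 0 0*A 1 2*A 2 1*A 3 4*A 4 5*A 5 3)) + ((-(A 0 0*A 1
      2*A 2 1*A 3 5*A 4 3*A 5 4)) + A 0 0*A 1 2*A 2 1*A 3 5*A 4 4*A 5 3)) + (A 0 0*A 1 2*A 2 3*A 3 1*A 4 4*A 5 5 +
      ((-(A 0 0*A 1 2*A 2 3*A 3 1*A 4 5*A 5 4)) + (-(A 0 0*A 1 2*A 2 3*A 3 4*A 4 1*A 5 5)))))) + (((A 0 0*A 1 2*A 2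
      3*A 3 4*A 4 5*A 5 1 + (A 0 0*A 1 2*A 2 3*A 3 5*A 4 1*A 5 4 + (-(A 0 0*A 1 2*A 2 3*A 3 5*A 4 4*A 5 1)))) +
      ((-(A 0 0*A 1 2*A 2 4*A 3 1*A 4 3*A 5 5)) + (A 0 0*A 1 2*A 2 4*A 3 1*A 4 5*A 5 3 + A 0 0*A 1 2*A 2 4*A 3 3*A 4
      1*A 5 5))) + (((-(A 0 0*A 1 2*A 2 4*A 3 3*A 4 5*A 5 1)) + ((-(A 0 0*A 1 2*A 2 4*A 3 5*A 4 1*A 5 3)) + A 0 0*A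
      1 2*A 2 4*A 3 5*A 4 3*A 5 1)) + (A 0 0*A 1 2*A 2 5*A 3 1*A 4 3*A 5 4 + ((-(A 0 0*A 1 2*A 2 5*A 3 1*A 4 4*A 5
      3)) + (-(A 0 0*A 1 2*A 2 5*A 3 3*A 4 1*A 5 4)))))))) + (((((A 0 0*A 1 2*A 2 5*A 3 3*A 4 4*A 5 1 + A 0 0*A 1
      2*A 2 5*A 3 4*A 4 1*A 5 3) + ((-(A 0 0*A 1 2*A 2 5*A 3 4*A 4 3*A 5 1)) + (A 0 0*A 1 3*A 2 1*A 3 2*A 4 4*A 5 5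
      + (-(A 0 0*A 1 3*A 2 1*A 3 2*A 4 5*A 5 4))))) + (((-(A 0 0*A 1 3*A 2 1*A 3 4*A 4 2*A 5 5)) + (A 0 0*A 1 3*A 2
      1*A 3 4*A 4 5*A 5 2 + A 0 0*A 1 3*A 2 1*A 3 5*A 4 2*A 5 4)) + ((-(A 0 0*A 1 3*A 2 1*A 3 5*A 4 4*A 5 2)) +
      ((-(A 0 0*A 1 3*A 2 2*A 3 1*A 4 4*A 5 5)) + A 0 0*A 1 3*A 2 2*A 3 1*A 4 5*A 5 4)))) + (((A 0 0*A 1 3*A 2 2*A 3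
      4*A 4 1*A 5 5 + (-(A 0 0*A 1 3*A 2 2*A 3 4*A 4 5*A 5 1))) + ((-(A 0 0*A 1 3*A 2 2*A 3 5*A 4 1*A 5 4)) + (A 0
      0*A 1 3*A 2 2*A 3 5*A 4 4*A 5 1 + A 0 0*A 1 3*A 2 4*A 3 1*A 4 2*A 5 5))) + (((-(A 0 0*A 1 3*A 2 4*A 3 1*A 4
      5*A 5 2)) + ((-(A 0 0*A 1 3*A 2 4*A 3 2*A 4 1*A 5 5)) + A 0 0*A 1 3*A 2 4*A 3 2*A 4 5*A 5 1)) + (A 0 0*A 1 3*A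
      2 4*A 3 5*A 4 1*A 5 2 + ((-(A 0 0*A 1 3*A 2 4*A 3 5*A 4 2*A 5 1)) + (-(A 0 0*A 1 3*A 2 5*A 3 1*A 4 2*A 5
      4))))))) + ((((A 0 0*A 1 3*A 2 5*A 3 1*A 4 4*A 5 2 + A 0 0*A 1 3*A 2 5*A 3 2*A 4 1*A 5 4) + ((-(A 0 0*A 1 3*A
      2 5*A 3 2*A 4 4*A 5 1)) + ((-(A 0 0*A 1 3*A 2 5*A 3 4*A 4 1*A 5 2)) + A 0 0*A 1 3*A 2 5*A 3 4*A 4 2*A 5 1))) +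
      (((-(A 0 0*A 1 4*A 2 1*A 3 2*A 4 3*A 5 5)) + (A 0 0*A 1 4*A 2 1*A 3 2*A 4 5*A 5 3 + A 0 0*A 1 4*A 2 1*A 3 3*A
      4 2*A 5 5)) + ((-(A 0 0*A 1 4*A 2 1*A 3 3*A 4 5*A 5 2)) + ((-(A 0 0*A 1 4*A 2 1*A 3 5*A 4 2*A 5 3)) + A 0 0*A
      1 4*A 2 1*A 3 5*A 4 3*A 5 2)))) + (((A 0 0*A 1 4*A 2 2*A 3 1*A 4 3*A 5 5 + ((-(A 0 0*A 1 4*A 2 2*A 3 1*A 4 5*A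
      5 3)) + (-(A 0 0*A 1 4*A 2 2*A 3 3*A 4 1*A 5 5)))) + (A 0 0*A 1 4*A 2 2*A 3 3*A 4 5*A 5 1 + (A 0 0*A 1 4*A 2
      2*A 3 5*A 4 1*A 5 3 + (-(A 0 0*A 1 4*A 2 2*A 3 5*A 4 3*A 5 1))))) + (((-(A 0 0*A 1 4*A 2 3*A 3 1*A 4 2*A 5 5))
      + (A 0 0*A 1 4*A 2 3*A 3 1*A 4 5*A 5 2 + A 0 0*A 1 4*A 2 3*A 3 2*A 4 1*A 5 5)) + ((-(A 0 0*A 1 4*A 2 3*A 3 2*A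
      4 5*A 5 1)) + ((-(A 0 0*A 1 4*A 2 3*A 3 5*A 4 1*A 5 2)) + A 0 0*A 1 4*A 2 3*A 3 5*A 4 2*A 5 1))))))) + ((((((A
      0 0*A 1 4*A 2 5*A 3 1*A 4 2*A 5 3 + (-(A 0 0*A 1 4*A 2 5*A 3 1*A 4 3*A 5 2))) + ((-(A 0 0*A 1 4*A 2 5*A 3 2*A
      4 1*A 5 3)) + (A 0 0*A 1 4*A 2 5*A 3 2*A 4 3*A 5 1 + A 0 0*A 1 4*A 2 5*A 3 3*A 4 1*A 5 2))) + (((-(A 0 0*A 1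
      4*A 2 5*A 3 3*A 4 2*A 5 1)) + (A 0 0*A 1 5*A 2 1*A 3 2*A 4 3*A 5 4 + (-(A 0 0*A 1 5*A 2 1*A 3 2*A 4 4*A 5
      3)))) + ((-(A 0 0*A 1 5*A 2 1*A 3 3*A 4 2*A 5 4)) + (A 0 0*A 1 5*A 2 1*A 3 3*A 4 4*A 5 2 + A 0 0*A 1 5*A 2 1*A
      3 4*A 4 2*A 5 3)))) + ((((-(A 0 0*A 1 5*A 2 1*A 3 4*A 4 3*A 5 2)) + (-(A 0 0*A 1 5*A 2 2*A 3 1*A 4 3*A 5 4)))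
      + (A 0 0*A 1 5*A 2 2*A 3 1*A 4 4*A 5 3 + (A 0 0*A 1 5*A 2 2*A 3 3*A 4 1*A 5 4 + (-(A 0 0*A 1 5*A 2 2*A 3 3*A 4
      4*A 5 1))))) + (((-(A 0 0*A 1 5*A 2 2*A 3 4*A 4 1*A 5 3)) + (A 0 0*A 1 5*A 2 2*A 3 4*A 4 3*A 5 1 + A 0 0*A 1
      5*A 2 3*A 3 1*A 4 2*A 5 4)) + ((-(A 0 0*A 1 5*A 2 3*A 3 1*A 4 4*A 5 2)) + ((-(A 0 0*A 1 5*A 2 3*A 3 2*A 4 1*A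
      5 4)) + A 0 0*A 1 5*A 2 3*A 3 2*A 4 4*A 5 1))))) + ((((A 0 0*A 1 5*A 2 3*A 3 4*A 4 1*A 5 2 + (-(A 0 0*A 1 5*A
      2 3*A 3 4*A 4 2*A 5 1))) + ((-(A 0 0*A 1 5*A 2 4*A 3 1*A 4 2*A 5 3)) + (A 0 0*A 1 5*A 2 4*A 3 1*A 4 3*A 5 2 +
      A 0 0*A 1 5*A 2 4*A 3 2*A 4 1*A 5 3))) + (((-(A 0 0*A 1 5*A 2 4*A 3 2*A 4 3*A 5 1)) + ((-(A 0 0*A 1 5*A 2 4*A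
      3 3*A 4 1*A 5 2)) + A 0 0*A 1 5*A 2 4*A 3 3*A 4 2*A 5 1)) + ((-(A 0 1*A 1 0*A 2 2*A 3 3*A 4 4*A 5 5)) + (A 0
      1*A 1 0*A 2 2*A 3 3*A 4 5*A 5 4 + A 0 1*A 1 0*A 2 2*A 3 4*A 4 3*A 5 5)))) + ((((-(A 0 1*A 1 0*A 2 2*A 3 4*A 4
      5*A 5 3)) + ((-(A 0 1*A 1 0*A 2 2*A 3 5*A 4 3*A 5 4)) + A 0 1*A 1 0*A 2 2*A 3 5*A 4 4*A 5 3)) + (A 0 1*A 1 0*A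
      2 3*A 3 2*A 4 4*A 5 5 + ((-(A 0 1*A 1 0*A 2 3*A 3 2*A 4 5*A 5 4)) + (-(A 0 1*A 1 0*A 2 3*A 3 4*A 4 2*A 5
      5))))) + ((A 0 1*A 1 0*A 2 3*A 3 4*A 4 5*A 5 2 + (A 0 1*A 1 0*A 2 3*A 3 5*A 4 2*A 5 4 + (-(A 0 1*A 1 0*A 2 3*A
      3 5*A 4 4*A 5 2)))) + ((-(A 0 1*A 1 0*A 2 4*A 3 2*A 4 3*A 5 5)) + (A 0 1*A 1 0*A 2 4*A 3 2*A 4 5*A 5 3 + A 0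
      1*A 1 0*A 2 4*A 3 3*A 4 2*A 5 5)))))) + ((((((-(A 0 1*A 1 0*A 2 4*A 3 3*A 4 5*A 5 2)) + (-(A 0 1*A 1 0*A 2 4*A
      3 5*A 4 2*A 5 3))) + (A 0 1*A 1 0*A 2 4*A 3 5*A 4 3*A 5 2 + (A 0 1*A 1 0*A 2 5*A 3 2*A 4 3*A 5 4 + (-(A 0 1*A
      1 0*A 2 5*A 3 2*A 4 4*A 5 3))))) + (((-(A 0 1*A 1 0*A 2 5*A 3 3*A 4 2*A 5 4)) + (A 0 1*A 1 0*A 2 5*A 3 3*A 4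
      4*A 5 2 + A 0 1*A 1 0*A 2 5*A 3 4*A 4 2*A 5 3)) + ((-(A 0 1*A 1 0*A 2 5*A 3 4*A 4 3*A 5 2)) + (A 0 1*A 1 2*A 2
      0*A 3 3*A 4 4*A 5 5 + (-(A 0 1*A 1 2*A 2 0*A 3 3*A 4 5*A 5 4)))))) + ((((-(A 0 1*A 1 2*A 2 0*A 3 4*A 4 3*A 5
      5)) + A 0 1*A 1 2*A 2 0*A 3 4*A 4 5*A 5 3) + (A 0 1*A 1 2*A 2 0*A 3 5*A 4 3*A 5 4 + ((-(A 0 1*A 1 2*A 2 0*A 3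
      5*A 4 4*A 5 3)) + (-(A 0 1*A 1 2*A 2 3*A 3 0*A 4 4*A 5 5))))) + ((A 0 1*A 1 2*A 2 3*A 3 0*A 4 5*A 5 4 + (A 0
      1*A 1 2*A 2 3*A 3 4*A 4 0*A 5 5 + (-(A 0 1*A 1 2*A 2 3*A 3 4*A 4 5*A 5 0)))) + ((-(A 0 1*A 1 2*A 2 3*A 3 5*A 4
      0*A 5 4)) + (A 0 1*A 1 2*A 2 3*A 3 5*A 4 4*A 5 0 + A 0 1*A 1 2*A 2 4*A 3 0*A 4 3*A 5 5))))) + (((((-(A 0 1*A 1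
      2*A 2 4*A 3 0*A 4 5*A 5 3)) + (-(A 0 1*A 1 2*A 2 4*A 3 3*A 4 0*A 5 5))) + (A 0 1*A 1 2*A 2 4*A 3 3*A 4 5*A 5 0
      + (A 0 1*A 1 2*A 2 4*A 3 5*A 4 0*A 5 3 + (-(A 0 1*A 1 2*A 2 4*A 3 5*A 4 3*A 5 0))))) + (((-(A 0 1*A 1 2*A 2
      5*A 3 0*A 4 3*A 5 4)) + (A 0 1*A 1 2*A 2 5*A 3 0*A 4 4*A 5 3 + A 0 1*A 1 2*A 2 5*A 3 3*A 4 0*A 5 4)) + ((-(A 0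
      1*A 1 2*A 2 5*A 3 3*A 4 4*A 5 0)) + ((-(A 0 1*A 1 2*A 2 5*A 3 4*A 4 0*A 5 3)) + A 0 1*A 1 2*A 2 5*A 3 4*A 4
      3*A 5 0)))) + ((((-(A 0 1*A 1 3*A 2 0*A 3 2*A 4 4*A 5 5)) + (A 0 1*A 1 3*A 2 0*A 3 2*A 4 5*A 5 4 + A 0 1*A 1
      3*A 2 0*A 3 4*A 4 2*A 5 5)) + ((-(A 0 1*A 1 3*A 2 0*A 3 4*A 4 5*A 5 2)) + ((-(A 0 1*A 1 3*A 2 0*A 3 5*A 4 2*A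
      5 4)) + A 0 1*A 1 3*A 2 0*A 3 5*A 4 4*A 5 2))) + ((A 0 1*A 1 3*A 2 2*A 3 0*A 4 4*A 5 5 + ((-(A 0 1*A 1 3*A 2
      2*A 3 0*A 4 5*A 5 4)) + (-(A 0 1*A 1 3*A 2 2*A 3 4*A 4 0*A 5 5)))) + (A 0 1*A 1 3*A 2 2*A 3 4*A 4 5*A 5 0 + (A
      0 1*A 1 3*A 2 2*A 3 5*A 4 0*A 5 4 + (-(A 0 1*A 1 3*A 2 2*A 3 5*A 4 4*A 5 0)))))))))) + ((((((((-(A 0 1*A 1 3*A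
      2 4*A 3 0*A 4 2*A 5 5)) + A 0 1*A 1 3*A 2 4*A 3 0*A 4 5*A 5 2) + (A 0 1*A 1 3*A 2 4*A 3 2*A 4 0*A 5 5 + ((-(A
      0 1*A 1 3*A 2 4*A 3 2*A 4 5*A 5 0)) + (-(A 0 1*A 1 3*A 2 4*A 3 5*A 4 0*A 5 2))))) + ((A 0 1*A 1 3*A 2 4*A 3
      5*A 4 2*A 5 0 + (A 0 1*A 1 3*A 2 5*A 3 0*A 4 2*A 5 4 + (-(A 0 1*A 1 3*A 2 5*A 3 0*A 4 4*A 5 2)))) + ((-(A 0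
      1*A 1 3*A 2 5*A 3 2*A 4 0*A 5 4)) + (A 0 1*A 1 3*A 2 5*A 3 2*A 4 4*A 5 0 + A 0 1*A 1 3*A 2 5*A 3 4*A 4 0*A 5
      2)))) + ((((-(A 0 1*A 1 3*A 2 5*A 3 4*A 4 2*A 5 0)) + A 0 1*A 1 4*A 2 0*A 3 2*A 4 3*A 5 5) + ((-(A 0 1*A 1 4*A
      2 0*A 3 2*A 4 5*A 5 3)) + ((-(A 0 1*A 1 4*A 2 0*A 3 3*A 4 2*A 5 5)) + A 0 1*A 1 4*A 2 0*A 3 3*A 4 5*A 5 2))) +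
      ((A 0 1*A 1 4*A 2 0*A 3 5*A 4 2*A 5 3 + ((-(A 0 1*A 1 4*A 2 0*A 3 5*A 4 3*A 5 2)) + (-(A 0 1*A 1 4*A 2 2*A 3
      0*A 4 3*A 5 5)))) + (A 0 1*A 1 4*A 2 2*A 3 0*A 4 5*A 5 3 + (A 0 1*A 1 4*A 2 2*A 3 3*A 4 0*A 5 5 + (-(A 0 1*A 1
      4*A 2 2*A 3 3*A 4 5*A 5 0))))))) + (((((-(A 0 1*A 1 4*A 2 2*A 3 5*A 4 0*A 5 3)) + A 0 1*A 1 4*A 2 2*A 3 5*A 4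
      3*A 5 0) + (A 0 1*A 1 4*A 2 3*A 3 0*A 4 2*A 5 5 + ((-(A 0 1*A 1 4*A 2 3*A 3 0*A 4 5*A 5 2)) + (-(A 0 1*A 1 4*A
      2 3*A 3 2*A 4 0*A 5 5))))) + ((A 0 1*A 1 4*A 2 3*A 3 2*A 4 5*A 5 0 + (A 0 1*A 1 4*A 2 3*A 3 5*A 4 0*A 5 2 +
      (-(A 0 1*A 1 4*A 2 3*A 3 5*A 4 2*A 5 0)))) + ((-(A 0 1*A 1 4*A 2 5*A 3 0*A 4 2*A 5 3)) + (A 0 1*A 1 4*A 2 5*A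
      3 0*A 4 3*A 5 2 + A 0 1*A 1 4*A 2 5*A 3 2*A 4 0*A 5 3)))) + ((((-(A 0 1*A 1 4*A 2 5*A 3 2*A 4 3*A 5 0)) +
      ((-(A 0 1*A 1 4*A 2 5*A 3 3*A 4 0*A 5 2)) + A 0 1*A 1 4*A 2 5*A 3 3*A 4 2*A 5 0)) + ((-(A 0 1*A 1 5*A 2 0*A 3
      2*A 4 3*A 5 4)) + (A 0 1*A 1 5*A 2 0*A 3 2*A 4 4*A 5 3 + A 0 1*A 1 5*A 2 0*A 3 3*A 4 2*A 5 4))) + (((-(A 0 1*A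
      1 5*A 2 0*A 3 3*A 4 4*A 5 2)) + ((-(A 0 1*A 1 5*A 2 0*A 3 4*A 4 2*A 5 3)) + A 0 1*A 1 5*A 2 0*A 3 4*A 4 3*A 5
      2)) + (A 0 1*A 1 5*A 2 2*A 3 0*A 4 3*A 5 4 + ((-(A 0 1*A 1 5*A 2 2*A 3 0*A 4 4*A 5 3)) + (-(A 0 1*A 1 5*A 2
      2*A 3 3*A 4 0*A 5 4)))))))) + (((((A 0 1*A 1 5*A 2 2*A 3 3*A 4 4*A 5 0 + A 0 1*A 1 5*A 2 2*A 3 4*A 4 0*A 5 3)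
      + ((-(A 0 1*A 1 5*A 2 2*A 3 4*A 4 3*A 5 0)) + ((-(A 0 1*A 1 5*A 2 3*A 3 0*A 4 2*A 5 4)) + A 0 1*A 1 5*A 2 3*A
      3 0*A 4 4*A 5 2))) + ((A 0 1*A 1 5*A 2 3*A 3 2*A 4 0*A 5 4 + ((-(A 0 1*A 1 5*A 2 3*A 3 2*A 4 4*A 5 0)) + (-(A
      0 1*A 1 5*A 2 3*A 3 4*A 4 0*A 5 2)))) + (A 0 1*A 1 5*A 2 3*A 3 4*A 4 2*A 5 0 + (A 0 1*A 1 5*A 2 4*A 3 0*A 4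
      2*A 5 3 + (-(A 0 1*A 1 5*A 2 4*A 3 0*A 4 3*A 5 2)))))) + ((((-(A 0 1*A 1 5*A 2 4*A 3 2*A 4 0*A 5 3)) + A 0 1*A
      1 5*A 2 4*A 3 2*A 4 3*A 5 0) + (A 0 1*A 1 5*A 2 4*A 3 3*A 4 0*A 5 2 + ((-(A 0 1*A 1 5*A 2 4*A 3 3*A 4 2*A 5
      0)) + A 0 2*A 1 0*A 2 1*A 3 3*A 4 4*A 5 5))) + (((-(A 0 2*A 1 0*A 2 1*A 3 3*A 4 5*A 5 4)) + ((-(A 0 2*A 1 0*A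
      2 1*A 3 4*A 4 3*A 5 5)) + A 0 2*A 1 0*A 2 1*A 3 4*A 4 5*A 5 3)) + (A 0 2*A 1 0*A 2 1*A 3 5*A 4 3*A 5 4 + ((-(A
      0 2*A 1 0*A 2 1*A 3 5*A 4 4*A 5 3)) + (-(A 0 2*A 1 0*A 2 3*A 3 1*A 4 4*A 5 5))))))) + ((((A 0 2*A 1 0*A 2 3*A
      3 1*A 4 5*A 5 4 + A 0 2*A 1 0*A 2 3*A 3 4*A 4 1*A 5 5) + ((-(A 0 2*A 1 0*A 2 3*A 3 4*A 4 5*A 5 1)) + ((-(A 0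
      2*A 1 0*A 2 3*A 3 5*A 4 1*A 5 4)) + A 0 2*A 1 0*A 2 3*A 3 5*A 4 4*A 5 1))) + ((A 0 2*A 1 0*A 2 4*A 3 1*A 4 3*A
      5 5 + ((-(A 0 2*A 1 0*A 2 4*A 3 1*A 4 5*A 5 3)) + (-(A 0 2*A 1 0*A 2 4*A 3 3*A 4 1*A 5 5)))) + (A 0 2*A 1 0*A
      2 4*A 3 3*A 4 5*A 5 1 + (A 0 2*A 1 0*A 2 4*A 3 5*A 4 1*A 5 3 + (-(A 0 2*A 1 0*A 2 4*A 3 5*A 4 3*A 5 1)))))) +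
      ((((-(A 0 2*A 1 0*A 2 5*A 3 1*A 4 3*A 5 4)) + (A 0 2*A 1 0*A 2 5*A 3 1*A 4 4*A 5 3 + A 0 2*A 1 0*A 2 5*A 3 3*A
      4 1*A 5 4)) + ((-(A 0 2*A 1 0*A 2 5*A 3 3*A 4 4*A 5 1)) + ((-(A 0 2*A 1 0*A 2 5*A 3 4*A 4 1*A 5 3)) + A 0 2*A
      1 0*A 2 5*A 3 4*A 4 3*A 5 1))) + (((-(A 0 2*A 1 1*A 2 0*A 3 3*A 4 4*A 5 5)) + (A 0 2*A 1 1*A 2 0*A 3 3*A 4 5*A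
      5 4 + A 0 2*A 1 1*A 2 0*A 3 4*A 4 3*A 5 5)) + ((-(A 0 2*A 1 1*A 2 0*A 3 4*A 4 5*A 5 3)) + ((-(A 0 2*A 1 1*A 2
      0*A 3 5*A 4 3*A 5 4)) + A 0 2*A 1 1*A 2 0*A 3 5*A 4 4*A 5 3))))))) + ((((((A 0 2*A 1 1*A 2 3*A 3 0*A 4 4*A 5 5
      + (-(A 0 2*A 1 1*A 2 3*A 3 0*A 4 5*A 5 4))) + ((-(A 0 2*A 1 1*A 2 3*A 3 4*A 4 0*A 5 5)) + (A 0 2*A 1 1*A 2 3*A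
      3 4*A 4 5*A 5 0 + A 0 2*A 1 1*A 2 3*A 3 5*A 4 0*A 5 4))) + (((-(A 0 2*A 1 1*A 2 3*A 3 5*A 4 4*A 5 0)) + ((-(A
      0 2*A 1 1*A 2 4*A 3 0*A 4 3*A 5 5)) + A 0 2*A 1 1*A 2 4*A 3 0*A 4 5*A 5 3)) + (A 0 2*A 1 1*A 2 4*A 3 3*A 4 0*A
      5 5 + ((-(A 0 2*A 1 1*A 2 4*A 3 3*A 4 5*A 5 0)) + (-(A 0 2*A 1 1*A 2 4*A 3 5*A 4 0*A 5 3)))))) + (((A 0 2*A 1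
      1*A 2 4*A 3 5*A 4 3*A 5 0 + A 0 2*A 1 1*A 2 5*A 3 0*A 4 3*A 5 4) + ((-(A 0 2*A 1 1*A 2 5*A 3 0*A 4 4*A 5 3)) +
      ((-(A 0 2*A 1 1*A 2 5*A 3 3*A 4 0*A 5 4)) + A 0 2*A 1 1*A 2 5*A 3 3*A 4 4*A 5 0))) + ((A 0 2*A 1 1*A 2 5*A 3
      4*A 4 0*A 5 3 + ((-(A 0 2*A 1 1*A 2 5*A 3 4*A 4 3*A 5 0)) + A 0 2*A 1 3*A 2 0*A 3 1*A 4 4*A 5 5)) + ((-(A 0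
      2*A 1 3*A 2 0*A 3 1*A 4 5*A 5 4)) + ((-(A 0 2*A 1 3*A 2 0*A 3 4*A 4 1*A 5 5)) + A 0 2*A 1 3*A 2 0*A 3 4*A 4
      5*A 5 1))))) + ((((A 0 2*A 1 3*A 2 0*A 3 5*A 4 1*A 5 4 + (-(A 0 2*A 1 3*A 2 0*A 3 5*A 4 4*A 5 1))) + ((-(A 0
      2*A 1 3*A 2 1*A 3 0*A 4 4*A 5 5)) + (A 0 2*A 1 3*A 2 1*A 3 0*A 4 5*A 5 4 + A 0 2*A 1 3*A 2 1*A 3 4*A 4 0*A 5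
      5))) + (((-(A 0 2*A 1 3*A 2 1*A 3 4*A 4 5*A 5 0)) + ((-(A 0 2*A 1 3*A 2 1*A 3 5*A 4 0*A 5 4)) + A 0 2*A 1 3*A
      2 1*A 3 5*A 4 4*A 5 0)) + (A 0 2*A 1 3*A 2 4*A 3 0*A 4 1*A 5 5 + ((-(A 0 2*A 1 3*A 2 4*A 3 0*A 4 5*A 5 1)) +
      (-(A 0 2*A 1 3*A 2 4*A 3 1*A 4 0*A 5 5)))))) + (((A 0 2*A 1 3*A 2 4*A 3 1*A 4 5*A 5 0 + (A 0 2*A 1 3*A 2 4*A 3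
      5*A 4 0*A 5 1 + (-(A 0 2*A 1 3*A 2 4*A 3 5*A 4 1*A 5 0)))) + ((-(A 0 2*A 1 3*A 2 5*A 3 0*A 4 1*A 5 4)) + (A 0
      2*A 1 3*A 2 5*A 3 0*A 4 4*A 5 1 + A 0 2*A 1 3*A 2 5*A 3 1*A 4 0*A 5 4))) + (((-(A 0 2*A 1 3*A 2 5*A 3 1*A 4
      4*A 5 0)) + ((-(A 0 2*A 1 3*A 2 5*A 3 4*A 4 0*A 5 1)) + A 0 2*A 1 3*A 2 5*A 3 4*A 4 1*A 5 0)) + ((-(A 0 2*A 1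
      4*A 2 0*A 3 1*A 4 3*A 5 5)) + (A 0 2*A 1 4*A 2 0*A 3 1*A 4 5*A 5 3 + A 0 2*A 1 4*A 2 0*A 3 3*A 4 1*A 5 5))))))
      + ((((((-(A 0 2*A 1 4*A 2 0*A 3 3*A 4 5*A 5 1)) + (-(A 0 2*A 1 4*A 2 0*A 3 5*A 4 1*A 5 3))) + (A 0 2*A 1 4*A 2
      0*A 3 5*A 4 3*A 5 1 + (A 0 2*A 1 4*A 2 1*A 3 0*A 4 3*A 5 5 + (-(A 0 2*A 1 4*A 2 1*A 3 0*A 4 5*A 5 3))))) +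
      (((-(A 0 2*A 1 4*A 2 1*A 3 3*A 4 0*A 5 5)) + (A 0 2*A 1 4*A 2 1*A 3 3*A 4 5*A 5 0 + A 0 2*A 1 4*A 2 1*A 3 5*A
      4 0*A 5 3)) + ((-(A 0 2*A 1 4*A 2 1*A 3 5*A 4 3*A 5 0)) + ((-(A 0 2*A 1 4*A 2 3*A 3 0*A 4 1*A 5 5)) + A 0 2*A
      1 4*A 2 3*A 3 0*A 4 5*A 5 1)))) + (((A 0 2*A 1 4*A 2 3*A 3 1*A 4 0*A 5 5 + (-(A 0 2*A 1 4*A 2 3*A 3 1*A 4 5*A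
      5 0))) + ((-(A 0 2*A 1 4*A 2 3*A 3 5*A 4 0*A 5 1)) + (A 0 2*A 1 4*A 2 3*A 3 5*A 4 1*A 5 0 + A 0 2*A 1 4*A 2
      5*A 3 0*A 4 1*A 5 3))) + (((-(A 0 2*A 1 4*A 2 5*A 3 0*A 4 3*A 5 1)) + ((-(A 0 2*A 1 4*A 2 5*A 3 1*A 4 0*A 5
      3)) + A 0 2*A 1 4*A 2 5*A 3 1*A 4 3*A 5 0)) + (A 0 2*A 1 4*A 2 5*A 3 3*A 4 0*A 5 1 + ((-(A 0 2*A 1 4*A 2 5*A 3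
      3*A 4 1*A 5 0)) + A 0 2*A 1 5*A 2 0*A 3 1*A 4 3*A 5 4))))) + (((((-(A 0 2*A 1 5*A 2 0*A 3 1*A 4 4*A 5 3)) +
      (-(A 0 2*A 1 5*A 2 0*A 3 3*A 4 1*A 5 4))) + (A 0 2*A 1 5*A 2 0*A 3 3*A 4 4*A 5 1 + (A 0 2*A 1 5*A 2 0*A 3 4*A
      4 1*A 5 3 + (-(A 0 2*A 1 5*A 2 0*A 3 4*A 4 3*A 5 1))))) + (((-(A 0 2*A 1 5*A 2 1*A 3 0*A 4 3*A 5 4)) + (A 0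
      2*A 1 5*A 2 1*A 3 0*A 4 4*A 5 3 + A 0 2*A 1 5*A 2 1*A 3 3*A 4 0*A 5 4)) + ((-(A 0 2*A 1 5*A 2 1*A 3 3*A 4 4*A
      5 0)) + ((-(A 0 2*A 1 5*A 2 1*A 3 4*A 4 0*A 5 3)) + A 0 2*A 1 5*A 2 1*A 3 4*A 4 3*A 5 0)))) + (((A 0 2*A 1 5*A
      2 3*A 3 0*A 4 1*A 5 4 + ((-(A 0 2*A 1 5*A 2 3*A 3 0*A 4 4*A 5 1)) + (-(A 0 2*A 1 5*A 2 3*A 3 1*A 4 0*A 5 4))))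
      + (A 0 2*A 1 5*A 2 3*A 3 1*A 4 4*A 5 0 + (A 0 2*A 1 5*A 2 3*A 3 4*A 4 0*A 5 1 + (-(A 0 2*A 1 5*A 2 3*A 3 4*A 4
      1*A 5 0))))) + (((-(A 0 2*A 1 5*A 2 4*A 3 0*A 4 1*A 5 3)) + (A 0 2*A 1 5*A 2 4*A 3 0*A 4 3*A 5 1 + A 0 2*A 1
      5*A 2 4*A 3 1*A 4 0*A 5 3)) + ((-(A 0 2*A 1 5*A 2 4*A 3 1*A 4 3*A 5 0)) + ((-(A 0 2*A 1 5*A 2 4*A 3 3*A 4 0*A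
      5 1)) + A 0 2*A 1 5*A 2 4*A 3 3*A 4 1*A 5 0))))))))) + (((((((((-(A 0 3*A 1 0*A 2 1*A 3 2*A 4 4*A 5 5)) + A 0
      3*A 1 0*A 2 1*A 3 2*A 4 5*A 5 4) + (A 0 3*A 1 0*A 2 1*A 3 4*A 4 2*A 5 5 + ((-(A 0 3*A 1 0*A 2 1*A 3 4*A 4 5*A
      5 2)) + (-(A 0 3*A 1 0*A 2 1*A 3 5*A 4 2*A 5 4))))) + ((A 0 3*A 1 0*A 2 1*A 3 5*A 4 4*A 5 2 + (A 0 3*A 1 0*A 2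
      2*A 3 1*A 4 4*A 5 5 + (-(A 0 3*A 1 0*A 2 2*A 3 1*A 4 5*A 5 4)))) + ((-(A 0 3*A 1 0*A 2 2*A 3 4*A 4 1*A 5 5)) +
      (A 0 3*A 1 0*A 2 2*A 3 4*A 4 5*A 5 1 + A 0 3*A 1 0*A 2 2*A 3 5*A 4 1*A 5 4)))) + ((((-(A 0 3*A 1 0*A 2 2*A 3
      5*A 4 4*A 5 1)) + (-(A 0 3*A 1 0*A 2 4*A 3 1*A 4 2*A 5 5))) + (A 0 3*A 1 0*A 2 4*A 3 1*A 4 5*A 5 2 + (A 0 3*A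
      1 0*A 2 4*A 3 2*A 4 1*A 5 5 + (-(A 0 3*A 1 0*A 2 4*A 3 2*A 4 5*A 5 1))))) + (((-(A 0 3*A 1 0*A 2 4*A 3 5*A 4
      1*A 5 2)) + (A 0 3*A 1 0*A 2 4*A 3 5*A 4 2*A 5 1 + A 0 3*A 1 0*A 2 5*A 3 1*A 4 2*A 5 4)) + ((-(A 0 3*A 1 0*A 2
      5*A 3 1*A 4 4*A 5 2)) + ((-(A 0 3*A 1 0*A 2 5*A 3 2*A 4 1*A 5 4)) + A 0 3*A 1 0*A 2 5*A 3 2*A 4 4*A 5 1))))) +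
      ((((A 0 3*A 1 0*A 2 5*A 3 4*A 4 1*A 5 2 + (-(A 0 3*A 1 0*A 2 5*A 3 4*A 4 2*A 5 1))) + (A 0 3*A 1 1*A 2 0*A 3
      2*A 4 4*A 5 5 + ((-(A 0 3*A 1 1*A 2 0*A 3 2*A 4 5*A 5 4)) + (-(A 0 3*A 1 1*A 2 0*A 3 4*A 4 2*A 5 5))))) + ((A
      0 3*A 1 1*A 2 0*A 3 4*A 4 5*A 5 2 + (A 0 3*A 1 1*A 2 0*A 3 5*A 4 2*A 5 4 + (-(A 0 3*A 1 1*A 2 0*A 3 5*A 4 4*A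
      5 2)))) + ((-(A 0 3*A 1 1*A 2 2*A 3 0*A 4 4*A 5 5)) + (A 0 3*A 1 1*A 2 2*A 3 0*A 4 5*A 5 4 + A 0 3*A 1 1*A 2
      2*A 3 4*A 4 0*A 5 5)))) + ((((-(A 0 3*A 1 1*A 2 2*A 3 4*A 4 5*A 5 0)) + ((-(A 0 3*A 1 1*A 2 2*A 3 5*A 4 0*A 5
      4)) + A 0 3*A 1 1*A 2 2*A 3 5*A 4 4*A 5 0)) + (A 0 3*A 1 1*A 2 4*A 3 0*A 4 2*A 5 5 + ((-(A 0 3*A 1 1*A 2 4*A 3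
      0*A 4 5*A 5 2)) + (-(A 0 3*A 1 1*A 2 4*A 3 2*A 4 0*A 5 5))))) + ((A 0 3*A 1 1*A 2 4*A 3 2*A 4 5*A 5 0 + (A 0
      3*A 1 1*A 2 4*A 3 5*A 4 0*A 5 2 + (-(A 0 3*A 1 1*A 2 4*A 3 5*A 4 2*A 5 0)))) + ((-(A 0 3*A 1 1*A 2 5*A 3 0*A 4
      2*A 5 4)) + (A 0 3*A 1 1*A 2 5*A 3 0*A 4 4*A 5 2 + A 0 3*A 1 1*A 2 5*A 3 2*A 4 0*A 5 4)))))) + ((((((-(A 0 3*A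
      1 1*A 2 5*A 3 2*A 4 4*A 5 0)) + (-(A 0 3*A 1 1*A 2 5*A 3 4*A 4 0*A 5 2))) + (A 0 3*A 1 1*A 2 5*A 3 4*A 4 2*A 5
      0 + ((-(A 0 3*A 1 2*A 2 0*A 3 1*A 4 4*A 5 5)) + A 0 3*A 1 2*A 2 0*A 3 1*A 4 5*A 5 4))) + ((A 0 3*A 1 2*A 2 0*A
      3 4*A 4 1*A 5 5 + ((-(A 0 3*A 1 2*A 2 0*A 3 4*A 4 5*A 5 1)) + (-(A 0 3*A 1 2*A 2 0*A 3 5*A 4 1*A 5 4)))) + (A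
      0 3*A 1 2*A 2 0*A 3 5*A 4 4*A 5 1 + (A 0 3*A 1 2*A 2 1*A 3 0*A 4 4*A 5 5 + (-(A 0 3*A 1 2*A 2 1*A 3 0*A 4 5*A
      5 4)))))) + ((((-(A 0 3*A 1 2*A 2 1*A 3 4*A 4 0*A 5 5)) + A 0 3*A 1 2*A 2 1*A 3 4*A 4 5*A 5 0) + (A 0 3*A 1
      2*A 2 1*A 3 5*A 4 0*A 5 4 + ((-(A 0 3*A 1 2*A 2 1*A 3 5*A 4 4*A 5 0)) + (-(A 0 3*A 1 2*A 2 4*A 3 0*A 4 1*A 5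
      5))))) + ((A 0 3*A 1 2*A 2 4*A 3 0*A 4 5*A 5 1 + (A 0 3*A 1 2*A 2 4*A 3 1*A 4 0*A 5 5 + (-(A 0 3*A 1 2*A 2 4*A
      3 1*A 4 5*A 5 0)))) + ((-(A 0 3*A 1 2*A 2 4*A 3 5*A 4 0*A 5 1)) + (A 0 3*A 1 2*A 2 4*A 3 5*A 4 1*A 5 0 + A 0
      3*A 1 2*A 2 5*A 3 0*A 4 1*A 5 4))))) + (((((-(A 0 3*A 1 2*A 2 5*A 3 0*A 4 4*A 5 1)) + (-(A 0 3*A 1 2*A 2 5*A 3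
      1*A 4 0*A 5 4))) + (A 0 3*A 1 2*A 2 5*A 3 1*A 4 4*A 5 0 + (A 0 3*A 1 2*A 2 5*A 3 4*A 4 0*A 5 1 + (-(A 0 3*A 1
      2*A 2 5*A 3 4*A 4 1*A 5 0))))) + ((A 0 3*A 1 4*A 2 0*A 3 1*A 4 2*A 5 5 + ((-(A 0 3*A 1 4*A 2 0*A 3 1*A 4 5*A 5
      2)) + (-(A 0 3*A 1 4*A 2 0*A 3 2*A 4 1*A 5 5)))) + (A 0 3*A 1 4*A 2 0*A 3 2*A 4 5*A 5 1 + (A 0 3*A 1 4*A 2 0*A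
      3 5*A 4 1*A 5 2 + (-(A 0 3*A 1 4*A 2 0*A 3 5*A 4 2*A 5 1)))))) + ((((-(A 0 3*A 1 4*A 2 1*A 3 0*A 4 2*A 5 5)) +
      (A 0 3*A 1 4*A 2 1*A 3 0*A 4 5*A 5 2 + A 0 3*A 1 4*A 2 1*A 3 2*A 4 0*A 5 5)) + ((-(A 0 3*A 1 4*A 2 1*A 3 2*A 4
      5*A 5 0)) + ((-(A 0 3*A 1 4*A 2 1*A 3 5*A 4 0*A 5 2)) + A 0 3*A 1 4*A 2 1*A 3 5*A 4 2*A 5 0))) + ((A 0 3*A 1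
      4*A 2 2*A 3 0*A 4 1*A 5 5 + ((-(A 0 3*A 1 4*A 2 2*A 3 0*A 4 5*A 5 1)) + (-(A 0 3*A 1 4*A 2 2*A 3 1*A 4 0*A 5
      5)))) + (A 0 3*A 1 4*A 2 2*A 3 1*A 4 5*A 5 0 + (A 0 3*A 1 4*A 2 2*A 3 5*A 4 0*A 5 1 + (-(A 0 3*A 1 4*A 2 2*A 3
      5*A 4 1*A 5 0))))))))) + (((((((-(A 0 3*A 1 4*A 2 5*A 3 0*A 4 1*A 5 2)) + A 0 3*A 1 4*A 2 5*A 3 0*A 4 2*A 5 1)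
      + (A 0 3*A 1 4*A 2 5*A 3 1*A 4 0*A 5 2 + ((-(A 0 3*A 1 4*A 2 5*A 3 1*A 4 2*A 5 0)) + (-(A 0 3*A 1 4*A 2 5*A 3
      2*A 4 0*A 5 1))))) + ((A 0 3*A 1 4*A 2 5*A 3 2*A 4 1*A 5 0 + ((-(A 0 3*A 1 5*A 2 0*A 3 1*A 4 2*A 5 4)) + A 0
      3*A 1 5*A 2 0*A 3 1*A 4 4*A 5 2)) + (A 0 3*A 1 5*A 2 0*A 3 2*A 4 1*A 5 4 + ((-(A 0 3*A 1 5*A 2 0*A 3 2*A 4 4*A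
      5 1)) + (-(A 0 3*A 1 5*A 2 0*A 3 4*A 4 1*A 5 2)))))) + (((A 0 3*A 1 5*A 2 0*A 3 4*A 4 2*A 5 1 + A 0 3*A 1 5*A
      2 1*A 3 0*A 4 2*A 5 4) + ((-(A 0 3*A 1 5*A 2 1*A 3 0*A 4 4*A 5 2)) + ((-(A 0 3*A 1 5*A 2 1*A 3 2*A 4 0*A 5 4))
      + A 0 3*A 1 5*A 2 1*A 3 2*A 4 4*A 5 0))) + ((A 0 3*A 1 5*A 2 1*A 3 4*A 4 0*A 5 2 + ((-(A 0 3*A 1 5*A 2 1*A 3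
      4*A 4 2*A 5 0)) + (-(A 0 3*A 1 5*A 2 2*A 3 0*A 4 1*A 5 4)))) + (A 0 3*A 1 5*A 2 2*A 3 0*A 4 4*A 5 1 + (A 0 3*A
      1 5*A 2 2*A 3 1*A 4 0*A 5 4 + (-(A 0 3*A 1 5*A 2 2*A 3 1*A 4 4*A 5 0))))))) + (((((-(A 0 3*A 1 5*A 2 2*A 3 4*A
      4 0*A 5 1)) + A 0 3*A 1 5*A 2 2*A 3 4*A 4 1*A 5 0) + (A 0 3*A 1 5*A 2 4*A 3 0*A 4 1*A 5 2 + ((-(A 0 3*A 1 5*A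
      2 4*A 3 0*A 4 2*A 5 1)) + (-(A 0 3*A 1 5*A 2 4*A 3 1*A 4 0*A 5 2))))) + ((A 0 3*A 1 5*A 2 4*A 3 1*A 4 2*A 5 0
      + (A 0 3*A 1 5*A 2 4*A 3 2*A 4 0*A 5 1 + (-(A 0 3*A 1 5*A 2 4*A 3 2*A 4 1*A 5 0)))) + (A 0 4*A 1 0*A 2 1*A 3
      2*A 4 3*A 5 5 + ((-(A 0 4*A 1 0*A 2 1*A 3 2*A 4 5*A 5 3)) + (-(A 0 4*A 1 0*A 2 1*A 3 3*A 4 2*A 5 5)))))) +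
      (((A 0 4*A 1 0*A 2 1*A 3 3*A 4 5*A 5 2 + (A 0 4*A 1 0*A 2 1*A 3 5*A 4 2*A 5 3 + (-(A 0 4*A 1 0*A 2 1*A 3 5*A 4
      3*A 5 2)))) + ((-(A 0 4*A 1 0*A 2 2*A 3 1*A 4 3*A 5 5)) + (A 0 4*A 1 0*A 2 2*A 3 1*A 4 5*A 5 3 + A 0 4*A 1 0*A
      2 2*A 3 3*A 4 1*A 5 5))) + (((-(A 0 4*A 1 0*A 2 2*A 3 3*A 4 5*A 5 1)) + ((-(A 0 4*A 1 0*A 2 2*A 3 5*A 4 1*A 5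
      3)) + A 0 4*A 1 0*A 2 2*A 3 5*A 4 3*A 5 1)) + (A 0 4*A 1 0*A 2 3*A 3 1*A 4 2*A 5 5 + ((-(A 0 4*A 1 0*A 2 3*A 3
      1*A 4 5*A 5 2)) + (-(A 0 4*A 1 0*A 2 3*A 3 2*A 4 1*A 5 5)))))))) + (((((A 0 4*A 1 0*A 2 3*A 3 2*A 4 5*A 5 1 +
      A 0 4*A 1 0*A 2 3*A 3 5*A 4 1*A 5 2) + ((-(A 0 4*A 1 0*A 2 3*A 3 5*A 4 2*A 5 1)) + ((-(A 0 4*A 1 0*A 2 5*A 3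
      1*A 4 2*A 5 3)) + A 0 4*A 1 0*A 2 5*A 3 1*A 4 3*A 5 2))) + ((A 0 4*A 1 0*A 2 5*A 3 2*A 4 1*A 5 3 + ((-(A 0 4*A
      1 0*A 2 5*A 3 2*A 4 3*A 5 1)) + (-(A 0 4*A 1 0*A 2 5*A 3 3*A 4 1*A 5 2)))) + (A 0 4*A 1 0*A 2 5*A 3 3*A 4 2*A
      5 1 + ((-(A 0 4*A 1 1*A 2 0*A 3 2*A 4 3*A 5 5)) + A 0 4*A 1 1*A 2 0*A 3 2*A 4 5*A 5 3)))) + (((A 0 4*A 1 1*A 2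
      0*A 3 3*A 4 2*A 5 5 + (-(A 0 4*A 1 1*A 2 0*A 3 3*A 4 5*A 5 2))) + ((-(A 0 4*A 1 1*A 2 0*A 3 5*A 4 2*A 5 3)) +
      (A 0 4*A 1 1*A 2 0*A 3 5*A 4 3*A 5 2 + A 0 4*A 1 1*A 2 2*A 3 0*A 4 3*A 5 5))) + (((-(A 0 4*A 1 1*A 2 2*A 3 0*A
      4 5*A 5 3)) + ((-(A 0 4*A 1 1*A 2 2*A 3 3*A 4 0*A 5 5)) + A 0 4*A 1 1*A 2 2*A 3 3*A 4 5*A 5 0)) + (A 0 4*A 1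
      1*A 2 2*A 3 5*A 4 0*A 5 3 + ((-(A 0 4*A 1 1*A 2 2*A 3 5*A 4 3*A 5 0)) + (-(A 0 4*A 1 1*A 2 3*A 3 0*A 4 2*A 5
      5))))))) + ((((A 0 4*A 1 1*A 2 3*A 3 0*A 4 5*A 5 2 + A 0 4*A 1 1*A 2 3*A 3 2*A 4 0*A 5 5) + ((-(A 0 4*A 1 1*A
      2 3*A 3 2*A 4 5*A 5 0)) + ((-(A 0 4*A 1 1*A 2 3*A 3 5*A 4 0*A 5 2)) + A 0 4*A 1 1*A 2 3*A 3 5*A 4 2*A 5 0))) +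
      ((A 0 4*A 1 1*A 2 5*A 3 0*A 4 2*A 5 3 + ((-(A 0 4*A 1 1*A 2 5*A 3 0*A 4 3*A 5 2)) + (-(A 0 4*A 1 1*A 2 5*A 3
      2*A 4 0*A 5 3)))) + (A 0 4*A 1 1*A 2 5*A 3 2*A 4 3*A 5 0 + (A 0 4*A 1 1*A 2 5*A 3 3*A 4 0*A 5 2 + (-(A 0 4*A 1
      1*A 2 5*A 3 3*A 4 2*A 5 0)))))) + (((A 0 4*A 1 2*A 2 0*A 3 1*A 4 3*A 5 5 + ((-(A 0 4*A 1 2*A 2 0*A 3 1*A 4 5*A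
      5 3)) + (-(A 0 4*A 1 2*A 2 0*A 3 3*A 4 1*A 5 5)))) + (A 0 4*A 1 2*A 2 0*A 3 3*A 4 5*A 5 1 + (A 0 4*A 1 2*A 2
      0*A 3 5*A 4 1*A 5 3 + (-(A 0 4*A 1 2*A 2 0*A 3 5*A 4 3*A 5 1))))) + (((-(A 0 4*A 1 2*A 2 1*A 3 0*A 4 3*A 5 5))
      + (A 0 4*A 1 2*A 2 1*A 3 0*A 4 5*A 5 3 + A 0 4*A 1 2*A 2 1*A 3 3*A 4 0*A 5 5)) + ((-(A 0 4*A 1 2*A 2 1*A 3 3*A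
      4 5*A 5 0)) + ((-(A 0 4*A 1 2*A 2 1*A 3 5*A 4 0*A 5 3)) + A 0 4*A 1 2*A 2 1*A 3 5*A 4 3*A 5 0)))))))) +
      (((((((A 0 4*A 1 2*A 2 3*A 3 0*A 4 1*A 5 5 + (-(A 0 4*A 1 2*A 2 3*A 3 0*A 4 5*A 5 1))) + ((-(A 0 4*A 1 2*A 2
      3*A 3 1*A 4 0*A 5 5)) + (A 0 4*A 1 2*A 2 3*A 3 1*A 4 5*A 5 0 + A 0 4*A 1 2*A 2 3*A 3 5*A 4 0*A 5 1))) + (((-(A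
      0 4*A 1 2*A 2 3*A 3 5*A 4 1*A 5 0)) + ((-(A 0 4*A 1 2*A 2 5*A 3 0*A 4 1*A 5 3)) + A 0 4*A 1 2*A 2 5*A 3 0*A 4
      3*A 5 1)) + (A 0 4*A 1 2*A 2 5*A 3 1*A 4 0*A 5 3 + ((-(A 0 4*A 1 2*A 2 5*A 3 1*A 4 3*A 5 0)) + (-(A 0 4*A 1
      2*A 2 5*A 3 3*A 4 0*A 5 1)))))) + (((A 0 4*A 1 2*A 2 5*A 3 3*A 4 1*A 5 0 + (-(A 0 4*A 1 3*A 2 0*A 3 1*A 4 2*A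
      5 5))) + (A 0 4*A 1 3*A 2 0*A 3 1*A 4 5*A 5 2 + (A 0 4*A 1 3*A 2 0*A 3 2*A 4 1*A 5 5 + (-(A 0 4*A 1 3*A 2 0*A
      3 2*A 4 5*A 5 1))))) + (((-(A 0 4*A 1 3*A 2 0*A 3 5*A 4 1*A 5 2)) + (A 0 4*A 1 3*A 2 0*A 3 5*A 4 2*A 5 1 + A 0
      4*A 1 3*A 2 1*A 3 0*A 4 2*A 5 5)) + ((-(A 0 4*A 1 3*A 2 1*A 3 0*A 4 5*A 5 2)) + ((-(A 0 4*A 1 3*A 2 1*A 3 2*A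
      4 0*A 5 5)) + A 0 4*A 1 3*A 2 1*A 3 2*A 4 5*A 5 0))))) + ((((A 0 4*A 1 3*A 2 1*A 3 5*A 4 0*A 5 2 + (-(A 0 4*A
      1 3*A 2 1*A 3 5*A 4 2*A 5 0))) + ((-(A 0 4*A 1 3*A 2 2*A 3 0*A 4 1*A 5 5)) + (A 0 4*A 1 3*A 2 2*A 3 0*A 4 5*A
      5 1 + A 0 4*A 1 3*A 2 2*A 3 1*A 4 0*A 5 5))) + (((-(A 0 4*A 1 3*A 2 2*A 3 1*A 4 5*A 5 0)) + ((-(A 0 4*A 1 3*A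
      2 2*A 3 5*A 4 0*A 5 1)) + A 0 4*A 1 3*A 2 2*A 3 5*A 4 1*A 5 0)) + (A 0 4*A 1 3*A 2 5*A 3 0*A 4 1*A 5 2 + ((-(A
      0 4*A 1 3*A 2 5*A 3 0*A 4 2*A 5 1)) + (-(A 0 4*A 1 3*A 2 5*A 3 1*A 4 0*A 5 2)))))) + (((A 0 4*A 1 3*A 2 5*A 3
      1*A 4 2*A 5 0 + (A 0 4*A 1 3*A 2 5*A 3 2*A 4 0*A 5 1 + (-(A 0 4*A 1 3*A 2 5*A 3 2*A 4 1*A 5 0)))) + (A 0 4*A 1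
      5*A 2 0*A 3 1*A 4 2*A 5 3 + ((-(A 0 4*A 1 5*A 2 0*A 3 1*A 4 3*A 5 2)) + (-(A 0 4*A 1 5*A 2 0*A 3 2*A 4 1*A 5
      3))))) + ((A 0 4*A 1 5*A 2 0*A 3 2*A 4 3*A 5 1 + (A 0 4*A 1 5*A 2 0*A 3 3*A 4 1*A 5 2 + (-(A 0 4*A 1 5*A 2 0*A
      3 3*A 4 2*A 5 1)))) + ((-(A 0 4*A 1 5*A 2 1*A 3 0*A 4 2*A 5 3)) + (A 0 4*A 1 5*A 2 1*A 3 0*A 4 3*A 5 2 + A 0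
      4*A 1 5*A 2 1*A 3 2*A 4 0*A 5 3)))))) + ((((((-(A 0 4*A 1 5*A 2 1*A 3 2*A 4 3*A 5 0)) + (-(A 0 4*A 1 5*A 2 1*A
      3 3*A 4 0*A 5 2))) + (A 0 4*A 1 5*A 2 1*A 3 3*A 4 2*A 5 0 + (A 0 4*A 1 5*A 2 2*A 3 0*A 4 1*A 5 3 + (-(A 0 4*A
      1 5*A 2 2*A 3 0*A 4 3*A 5 1))))) + (((-(A 0 4*A 1 5*A 2 2*A 3 1*A 4 0*A 5 3)) + (A 0 4*A 1 5*A 2 2*A 3 1*A 4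
      3*A 5 0 + A 0 4*A 1 5*A 2 2*A 3 3*A 4 0*A 5 1)) + ((-(A 0 4*A 1 5*A 2 2*A 3 3*A 4 1*A 5 0)) + ((-(A 0 4*A 1
      5*A 2 3*A 3 0*A 4 1*A 5 2)) + A 0 4*A 1 5*A 2 3*A 3 0*A 4 2*A 5 1)))) + (((A 0 4*A 1 5*A 2 3*A 3 1*A 4 0*A 5 2
      + (-(A 0 4*A 1 5*A 2 3*A 3 1*A 4 2*A 5 0))) + ((-(A 0 4*A 1 5*A 2 3*A 3 2*A 4 0*A 5 1)) + (A 0 4*A 1 5*A 2 3*A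
      3 2*A 4 1*A 5 0 + (-(A 0 5*A 1 0*A 2 1*A 3 2*A 4 3*A 5 4))))) + ((A 0 5*A 1 0*A 2 1*A 3 2*A 4 4*A 5 3 + (A 0
      5*A 1 0*A 2 1*A 3 3*A 4 2*A 5 4 + (-(A 0 5*A 1 0*A 2 1*A 3 3*A 4 4*A 5 2)))) + ((-(A 0 5*A 1 0*A 2 1*A 3 4*A 4
      2*A 5 3)) + (A 0 5*A 1 0*A 2 1*A 3 4*A 4 3*A 5 2 + A 0 5*A 1 0*A 2 2*A 3 1*A 4 3*A 5 4))))) + (((((-(A 0 5*A 1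
      0*A 2 2*A 3 1*A 4 4*A 5 3)) + (-(A 0 5*A 1 0*A 2 2*A 3 3*A 4 1*A 5 4))) + (A 0 5*A 1 0*A 2 2*A 3 3*A 4 4*A 5 1
      + (A 0 5*A 1 0*A 2 2*A 3 4*A 4 1*A 5 3 + (-(A 0 5*A 1 0*A 2 2*A 3 4*A 4 3*A 5 1))))) + (((-(A 0 5*A 1 0*A 2
      3*A 3 1*A 4 2*A 5 4)) + (A 0 5*A 1 0*A 2 3*A 3 1*A 4 4*A 5 2 + A 0 5*A 1 0*A 2 3*A 3 2*A 4 1*A 5 4)) + ((-(A 0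
      5*A 1 0*A 2 3*A 3 2*A 4 4*A 5 1)) + ((-(A 0 5*A 1 0*A 2 3*A 3 4*A 4 1*A 5 2)) + A 0 5*A 1 0*A 2 3*A 3 4*A 4
      2*A 5 1)))) + (((A 0 5*A 1 0*A 2 4*A 3 1*A 4 2*A 5 3 + ((-(A 0 5*A 1 0*A 2 4*A 3 1*A 4 3*A 5 2)) + (-(A 0 5*A
      1 0*A 2 4*A 3 2*A 4 1*A 5 3)))) + (A 0 5*A 1 0*A 2 4*A 3 2*A 4 3*A 5 1 + (A 0 5*A 1 0*A 2 4*A 3 3*A 4 1*A 5 2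
      + (-(A 0 5*A 1 0*A 2 4*A 3 3*A 4 2*A 5 1))))) + ((A 0 5*A 1 1*A 2 0*A 3 2*A 4 3*A 5 4 + ((-(A 0 5*A 1 1*A 2
      0*A 3 2*A 4 4*A 5 3)) + (-(A 0 5*A 1 1*A 2 0*A 3 3*A 4 2*A 5 4)))) + (A 0 5*A 1 1*A 2 0*A 3 3*A 4 4*A 5 2 + (A
      0 5*A 1 1*A 2 0*A 3 4*A 4 2*A 5 3 + (-(A 0 5*A 1 1*A 2 0*A 3 4*A 4 3*A 5 2))))))))) + (((((((-(A 0 5*A 1 1*A 2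
      2*A 3 0*A 4 3*A 5 4)) + A 0 5*A 1 1*A 2 2*A 3 0*A 4 4*A 5 3) + (A 0 5*A 1 1*A 2 2*A 3 3*A 4 0*A 5 4 + ((-(A 0
      5*A 1 1*A 2 2*A 3 3*A 4 4*A 5 0)) + (-(A 0 5*A 1 1*A 2 2*A 3 4*A 4 0*A 5 3))))) + ((A 0 5*A 1 1*A 2 2*A 3 4*A
      4 3*A 5 0 + (A 0 5*A 1 1*A 2 3*A 3 0*A 4 2*A 5 4 + (-(A 0 5*A 1 1*A 2 3*A 3 0*A 4 4*A 5 2)))) + ((-(A 0 5*A 1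
      1*A 2 3*A 3 2*A 4 0*A 5 4)) + (A 0 5*A 1 1*A 2 3*A 3 2*A 4 4*A 5 0 + A 0 5*A 1 1*A 2 3*A 3 4*A 4 0*A 5 2)))) +
      ((((-(A 0 5*A 1 1*A 2 3*A 3 4*A 4 2*A 5 0)) + (-(A 0 5*A 1 1*A 2 4*A 3 0*A 4 2*A 5 3))) + (A 0 5*A 1 1*A 2 4*A
      3 0*A 4 3*A 5 2 + (A 0 5*A 1 1*A 2 4*A 3 2*A 4 0*A 5 3 + (-(A 0 5*A 1 1*A 2 4*A 3 2*A 4 3*A 5 0))))) + (((-(A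
      0 5*A 1 1*A 2 4*A 3 3*A 4 0*A 5 2)) + (A 0 5*A 1 1*A 2 4*A 3 3*A 4 2*A 5 0 + (-(A 0 5*A 1 2*A 2 0*A 3 1*A 4
      3*A 5 4)))) + (A 0 5*A 1 2*A 2 0*A 3 1*A 4 4*A 5 3 + (A 0 5*A 1 2*A 2 0*A 3 3*A 4 1*A 5 4 + (-(A 0 5*A 1 2*A 2
      0*A 3 3*A 4 4*A 5 1))))))) + (((((-(A 0 5*A 1 2*A 2 0*A 3 4*A 4 1*A 5 3)) + A 0 5*A 1 2*A 2 0*A 3 4*A 4 3*A 5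
      1) + (A 0 5*A 1 2*A 2 1*A 3 0*A 4 3*A 5 4 + ((-(A 0 5*A 1 2*A 2 1*A 3 0*A 4 4*A 5 3)) + (-(A 0 5*A 1 2*A 2 1*A
      3 3*A 4 0*A 5 4))))) + ((A 0 5*A 1 2*A 2 1*A 3 3*A 4 4*A 5 0 + (A 0 5*A 1 2*A 2 1*A 3 4*A 4 0*A 5 3 + (-(A 0
      5*A 1 2*A 2 1*A 3 4*A 4 3*A 5 0)))) + ((-(A 0 5*A 1 2*A 2 3*A 3 0*A 4 1*A 5 4)) + (A 0 5*A 1 2*A 2 3*A 3 0*A 4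
      4*A 5 1 + A 0 5*A 1 2*A 2 3*A 3 1*A 4 0*A 5 4)))) + ((((-(A 0 5*A 1 2*A 2 3*A 3 1*A 4 4*A 5 0)) + ((-(A 0 5*A
      1 2*A 2 3*A 3 4*A 4 0*A 5 1)) + A 0 5*A 1 2*A 2 3*A 3 4*A 4 1*A 5 0)) + (A 0 5*A 1 2*A 2 4*A 3 0*A 4 1*A 5 3 +
      ((-(A 0 5*A 1 2*A 2 4*A 3 0*A 4 3*A 5 1)) + (-(A 0 5*A 1 2*A 2 4*A 3 1*A 4 0*A 5 3))))) + ((A 0 5*A 1 2*A 2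
      4*A 3 1*A 4 3*A 5 0 + (A 0 5*A 1 2*A 2 4*A 3 3*A 4 0*A 5 1 + (-(A 0 5*A 1 2*A 2 4*A 3 3*A 4 1*A 5 0)))) + (A 0
      5*A 1 3*A 2 0*A 3 1*A 4 2*A 5 4 + ((-(A 0 5*A 1 3*A 2 0*A 3 1*A 4 4*A 5 2)) + (-(A 0 5*A 1 3*A 2 0*A 3 2*A 4
      1*A 5 4)))))))) + (((((A 0 5*A 1 3*A 2 0*A 3 2*A 4 4*A 5 1 + A 0 5*A 1 3*A 2 0*A 3 4*A 4 1*A 5 2) + ((-(A 0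
      5*A 1 3*A 2 0*A 3 4*A 4 2*A 5 1)) + ((-(A 0 5*A 1 3*A 2 1*A 3 0*A 4 2*A 5 4)) + A 0 5*A 1 3*A 2 1*A 3 0*A 4
      4*A 5 2))) + ((A 0 5*A 1 3*A 2 1*A 3 2*A 4 0*A 5 4 + ((-(A 0 5*A 1 3*A 2 1*A 3 2*A 4 4*A 5 0)) + (-(A 0 5*A 1
      3*A 2 1*A 3 4*A 4 0*A 5 2)))) + (A 0 5*A 1 3*A 2 1*A 3 4*A 4 2*A 5 0 + (A 0 5*A 1 3*A 2 2*A 3 0*A 4 1*A 5 4 +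
      (-(A 0 5*A 1 3*A 2 2*A 3 0*A 4 4*A 5 1)))))) + ((((-(A 0 5*A 1 3*A 2 2*A 3 1*A 4 0*A 5 4)) + A 0 5*A 1 3*A 2
      2*A 3 1*A 4 4*A 5 0) + (A 0 5*A 1 3*A 2 2*A 3 4*A 4 0*A 5 1 + ((-(A 0 5*A 1 3*A 2 2*A 3 4*A 4 1*A 5 0)) + (-(A
      0 5*A 1 3*A 2 4*A 3 0*A 4 1*A 5 2))))) + ((A 0 5*A 1 3*A 2 4*A 3 0*A 4 2*A 5 1 + (A 0 5*A 1 3*A 2 4*A 3 1*A 4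
      0*A 5 2 + (-(A 0 5*A 1 3*A 2 4*A 3 1*A 4 2*A 5 0)))) + ((-(A 0 5*A 1 3*A 2 4*A 3 2*A 4 0*A 5 1)) + (A 0 5*A 1
      3*A 2 4*A 3 2*A 4 1*A 5 0 + (-(A 0 5*A 1 4*A 2 0*A 3 1*A 4 2*A 5 3))))))) + ((((A 0 5*A 1 4*A 2 0*A 3 1*A 4
      3*A 5 2 + A 0 5*A 1 4*A 2 0*A 3 2*A 4 1*A 5 3) + ((-(A 0 5*A 1 4*A 2 0*A 3 2*A 4 3*A 5 1)) + ((-(A 0 5*A 1 4*A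
      2 0*A 3 3*A 4 1*A 5 2)) + A 0 5*A 1 4*A 2 0*A 3 3*A 4 2*A 5 1))) + ((A 0 5*A 1 4*A 2 1*A 3 0*A 4 2*A 5 3 +
      ((-(A 0 5*A 1 4*A 2 1*A 3 0*A 4 3*A 5 2)) + (-(A 0 5*A 1 4*A 2 1*A 3 2*A 4 0*A 5 3)))) + (A 0 5*A 1 4*A 2 1*A
      3 2*A 4 3*A 5 0 + (A 0 5*A 1 4*A 2 1*A 3 3*A 4 0*A 5 2 + (-(A 0 5*A 1 4*A 2 1*A 3 3*A 4 2*A 5 0)))))) +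
      ((((-(A 0 5*A 1 4*A 2 2*A 3 0*A 4 1*A 5 3)) + (A 0 5*A 1 4*A 2 2*A 3 0*A 4 3*A 5 1 + A 0 5*A 1 4*A 2 2*A 3 1*A
      4 0*A 5 3)) + ((-(A 0 5*A 1 4*A 2 2*A 3 1*A 4 3*A 5 0)) + ((-(A 0 5*A 1 4*A 2 2*A 3 3*A 4 0*A 5 1)) + A 0 5*A
      1 4*A 2 2*A 3 3*A 4 1*A 5 0))) + ((A 0 5*A 1 4*A 2 3*A 3 0*A 4 1*A 5 2 + ((-(A 0 5*A 1 4*A 2 3*A 3 0*A 4 2*A 5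
      1)) + (-(A 0 5*A 1 4*A 2 3*A 3 1*A 4 0*A 5 2)))) + (A 0 5*A 1 4*A 2 3*A 3 1*A 4 2*A 5 0 + (A 0 5*A 1 4*A 2 3*A
      3 2*A 4 0*A 5 1 + (-(A 0 5*A 1 4*A 2 3*A 3 2*A 4 1*A 5 0)))))))))))) := by
  rw [Matrix.det_succ_row_zero]
  simp only [Fin.sum_univ_succ, detFin5, Matrix.submatrix_apply,
    Finset.univ_unique, Finset.sum_singleton, Fin.default_eq_zero, Fin.val_zero, Fin.val_succ,
    pow_succ, pow_zero, sa4_0_0, sa4_0_1, sa4_0_2, sa4_1_0, sa4_1_1, sa4_1_2, sa4_2_0, sa4_2_1, sa4_2_2, sa4_3_0, sa4_3_1, sa4_3_2, sa5_0_0, sa5_0_1, sa5_0_2, sa5_0_3, sa5_1_0, sa5_1_1, sa5_1_2, sa5_1_3, sa5_2_0, sa5_2_1, sa5_2_2, sa5_2_3, sa5_3_0, sa5_3_1, sa5_3_2, sa5_3_3, sa5_4_0, sa5_4_1, sa5_4_2, sa5_4_3, sa6_0_0, sa6_0_1, sa6_0_2, sa6_0_3, sa6_0_4, sa6_1_0,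 sa6_1_1, sa6_1_2, sa6_1_3, sa6_1_4, sa6_2_0, sa6_2_1, sa6_2_2, sa6_2_3, sa6_2_4, sa6_3_0, sa6_3_1, sa6_3_2, sa6_3_3, sa6_3_4, sa6_4_0, sa6_4_1, sa6_4_2, sa6_4_3, sa6_4_4, sa6_5_0, sa6_5_1, sa6_5_2, sa6_5_3, sa6_5_4, sc1_0, sc2_0, sc2_1, sc3_0, sc3_1, sc3_2, sc4_0, sc4_1, sc4_2, sc4_3, sc5_0, sc5_1, sc5_2, sc5_3, sc5_4]
  ring


theorem det3_expand {R : Type*} [CommRing R] (a b c : Fin 3 → R) :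
    det3 a b c = a 0 * b 1 * c 2 - a 0 * b 2 * c 1 - a 1 * b 0 * c 2
      + a 1 * b 2 * c 0 + a 2 * b 0 * c 1 - a 2 * b 1 * c 0 := by
  rw [det3, Matrix.det_fin_three]
  simp only [Matrix.of_apply, Matrix.cons_val', Matrix.cons_val_zero, Matrix.cons_val_one,
    Matrix.head_cons, Matrix.head_fin_const, Matrix.empty_val', Matrix.cons_val_fin_one,
    Matrix.cons_val_two, Matrix.tail_cons]

set_option maxHeartbeats 10000000 in
theorem key {k : Type*} [Field k] (p : Fin 6 → Fin 3 → k) :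
    cobleQ p = - (monMat p).det := by
  have e0 : ∀ i, monMat p i 0 = p i 0 ^ 2 := fun i => rfl
  have e1 : ∀ i, monMat p i 1 = p i 1 ^ 2 := fun i => rfl
  have e2 : ∀ i, monMat p i 2 = p i 2 ^ 2 := fun i => rfl
  have e3 : ∀ i, monMat p i 3 = p i 0 * p i 1 := fun i => rfl
  have e4 : ∀ i, monMat p i 4 = p i 0 * p i 2 := fun i => rfl
  have e5 : ∀ i, monMat p i 5 = p i 1 * p i 2 := fun i => rfl
  rw [detFin6]
  simp only [e0, e1, e2, e3, e4, e5, cobleQ, det3_expand]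
  ring

theorem v6x {α : Type*} (a b c d e f : α) :
    ![a,b,c,d,e,f] 0 = a ∧ ![a,b,c,d,e,f] 1 = b ∧ ![a,b,c,d,e,f] 2 = c ∧
    ![a,b,c,d,e,f] 3 = d ∧ ![a,b,c,d,e,f] 4 = e ∧ ![a,b,c,d,e,f] 5 = f :=
  ⟨rfl, rfl, rfl, rfl, rfl, rfl⟩
theorem v6_0 {α : Type*} (a b c d e f : α) : ![a,b,c,d,e,f] 0 = a := rfl
theorem v6_1 {α : Type*} (a b c d e f : α) : ![a,b,c,d,e,f] 1 = b := rfl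
theorem v6_2 {α : Type*} (a b c d e f : α) : ![a,b,c,d,e,f] 2 = c := rfl
theorem v6_3 {α : Type*} (a b c d e f : α) : ![a,b,c,d,e,f] 3 = d := rfl
theorem v6_4 {α : Type*} (a b c d e f : α) : ![a,b,c,d,e,f] 4 = e := rfl
theorem v6_5 {α : Type*} (a b c d e f : α) : ![a,b,c,d,e,f] 5 = f := rfl
theorem v3_0 {α : Type*} (a b c : α) : ![a,b,c] 0 = a := rfl
theorem v3_1 {α : Type*} (a b c : α) : ![a,b,c] 1 = b := rfl
theorem v3_2 {α : Type*} (a b c : α) : ![a,b,c] 2 = c := rfl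

noncomputable def mons : Fin 6 → (Fin 3 →₀ ℕ)
  | 0 => Finsupp.single 0 2
  | 1 => Finsupp.single 1 2
  | 2 => Finsupp.single 2 2
  | 3 => Finsupp.single 0 1 + Finsupp.single 1 1
  | 4 => Finsupp.single 0 1 + Finsupp.single 2 1
  | 5 => Finsupp.single 1 1 + Finsupp.single 2 1

def vec : Fin 6 → Fin 3 → ℕ
  | 0 => ![2,0,0]
  | 1 => ![0,2,0]
  | 2 => ![0,0,2]
  | 3 => ![1,1,0]
  | 4 => ![1,0,1]
  | 5 => ![0,1,1]

theorem mons_apply (j : Fin 6) (i : Fin 3) : mons j i = vec j i := by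
  fin_cases j <;> fin_cases i <;>
    first
      | (simp [mons, vec, Finsupp.single_apply]; done)
      | (simp [mons, vec, Finsupp.single_apply]; rfl)
      | rfl

theorem mons_inj : Function.Injective mons := by
  intro a b hab
  have h : ∀ i, vec a i = vec b i := fun i => by
    rw [← mons_apply, ← mons_apply, hab]
  have hvec : Function.Injective vec := by decide
  exact hvec (funext h)

theorem deg3 (d : Fin 3 →₀ ℕ) : d.degree = d 0 + d 1 + d 2 := by
  rw [Finsupp.degree_apply,
    Finset.sum_subset (Finset.subset_univ d.support)
      (fun x _ hx => Finsupp.notMem_support_iff.mp hx),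
    Fin.sum_univ_three]

theorem mons_degree (j : Fin 6) : (mons j).degree = 2 := by
  rw [deg3, mons_apply, mons_apply, mons_apply]
  fin_cases j <;> norm_num [vec, v3_2]

theorem mons_classify (d : Fin 3 →₀ ℕ) (h : d.degree = 2) : ∃ j, mons j = d := by
  rw [deg3] at h
  have hc : (d 0 = 2 ∧ d 1 = 0 ∧ d 2 = 0) ∨ (d 0 = 0 ∧ d 1 = 2 ∧ d 2 = 0) ∨
      (d 0 = 0 ∧ d 1 = 0 ∧ d 2 = 2) ∨ (d 0 = 1 ∧ d 1 = 1 ∧ d 2 = 0) ∨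
      (d 0 = 1 ∧ d 1 = 0 ∧ d 2 = 1) ∨ (d 0 = 0 ∧ d 1 = 1 ∧ d 2 = 1) := by omega
  have key : ∀ j : Fin 6, (∀ i, d i = vec j i) → ∃ j', mons j' = d := by
    intro j hj
    exact ⟨j, Finsupp.ext fun i => by rw [mons_apply, hj]⟩
  rcases hc with ⟨h0,h1,h2⟩|⟨h0,h1,h2⟩|⟨h0,h1,h2⟩|⟨h0,h1,h2⟩|⟨h0,h1,h2⟩|⟨h0,h1,h2⟩
  · exact key 0 (fun i => by fin_cases i <;> simp [vec, h0, h1, h2] <;> rfl)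
  · exact key 1 (fun i => by fin_cases i <;> simp [vec, h0, h1, h2] <;> rfl)
  · exact key 2 (fun i => by fin_cases i <;> simp [vec, h0, h1, h2] <;> rfl)
  · exact key 3 (fun i => by fin_cases i <;> simp [vec, h0, h1, h2] <;> rfl)
  · exact key 4 (fun i => by fin_cases i <;> simp [vec, h0, h1, h2] <;> rfl)
  · exact key 5 (fun i => by fin_cases i <;> simp [vec, h0, h1, h2] <;> rfl)

noncomputable def phi {k : Type*} [Field k] (v : Fin 6 → k) : MvPolynomial (Fin 3) k :=
  ∑ j, monomial (mons j) (v j)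

theorem phi_homog {k : Type*} [Field k] (v : Fin 6 → k) : (phi v).IsHomogeneous 2 :=
  IsHomogeneous.sum _ _ _ (fun j _ => isHomogeneous_monomial _ (mons_degree j))

theorem phi_coeff {k : Type*} [Field k] (v : Fin 6 → k) (j : Fin 6) :
    coeff (mons j) (phi v) = v j := by
  rw [phi, coeff_sum]
  simp [coeff_monomial, mons_inj.eq_iff]

theorem phi_eval {k : Type*} [Field k] (v : Fin 6 → k) (x : Fin 3 → k) :
    eval x (phi v) = ∑ j, mrow x j * v j := by
  rw [phi]
  simp only [map_sum, eval_monomial]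
  refine Finset.sum_congr rfl fun j _ => ?_
  fin_cases j <;>
    simp [mons, mrow, Finsupp.prod_add_index', Finsupp.prod_single_index, pow_add,
      mul_comm, v6_0, v6_1, v6_2, v6_3, v6_4, v6_5, v3_0, v3_1, v3_2, sq]

theorem phi_recon {k : Type*} [Field k] (q : MvPolynomial (Fin 3) k)
    (hq : q.IsHomogeneous 2) : q = phi (fun j => coeff (mons j) q) := by
  apply MvPolynomial.ext
  intro d
  rw [phi, coeff_sum]
  simp only [coeff_monomial]
  by_cases hdeg : d.degree = 2
  · obtain ⟨j, hj⟩ := mons_classify d hdeg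
    subst hj
    simp [mons_inj.eq_iff]
  · rw [hq.coeff_eq_zero hdeg]
    refine (Finset.sum_eq_zero fun j _ => ?_).symm
    rw [if_neg]
    intro hj
    exact hdeg (hj ▸ mons_degree j)

theorem phi_ne_zero {k : Type*} [Field k] {v : Fin 6 → k} (hv : v ≠ 0) : phi v ≠ 0 := by
  obtain ⟨j, hj⟩ := Function.ne_iff.mp hv
  intro h0
  apply hj
  rw [← phi_coeff v j, h0]
  simp

theorem phi_zero {k : Type*} [Field k] : phi (0 : Fin 6 → k) = 0 := by
  simp [phi]

/-- `Q(p₁,…,p₆)` vanishes if and only if the six points lie on a conic, and `Q` is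
skew-symmetric under permutations of the six points. -/
theorem cobleQ_vanishes_iff_conic_and_skew (k : Type*) [Field k] [CharZero k]
    [IsAlgClosed k] :
    (∀ p : Fin 6 → Fin 3 → k,
      cobleQ p = 0 ↔ ∃ q : MvPolynomial (Fin 3) k, q ≠ 0 ∧ q.IsHomogeneous 2 ∧
        ∀ i, eval (p i) q = 0) ∧
    (∀ (p : Fin 6 → Fin 3 → k) (σ : Equiv.Perm (Fin 6)),
      cobleQ (p ∘ σ) = ((Equiv.Perm.sign σ : ℤ) : k) * cobleQ p) := by
  constructor
  · intro p
    rw [key, neg_eq_zero, ← Matrix.exists_mulVec_eq_zero_iff]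
    constructor
    · rintro ⟨v, hv, hmv⟩
      refine ⟨phi v, phi_ne_zero hv, phi_homog v, fun i => ?_⟩
      rw [phi_eval]
      have := congrFun hmv i
      simpa [Matrix.mulVec, dotProduct, monMat] using this
    · rintro ⟨q, hq, hhom, hev⟩
      refine ⟨fun j => coeff (mons j) q, ?_, ?_⟩
      · intro hv0
        exact hq (by rw [phi_recon q hhom, hv0, phi_zero])
      · funext i
        have := hev i
        rw [phi_recon q hhom, phi_eval] at this
        simpa [Matrix.mulVec, dotProduct, monMat] using this
  · intro p σ
    rw [key, key]
    have hsub : monMat (p ∘ σ) = (monMat p).submatrix σ id := rfl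
    rw [hsub, Matrix.det_permute]
    rcases Int.units_eq_one_or (Equiv.Perm.sign σ) with h | h <;> rw [h] <;> push_cast <;> ring
end

section
/- (Morley's differential identity.) Let D ∈ k[X₀,X₁,X₂] be any homogeneous cubic. In the polynomial ring k[ξ₀,ξ₁,ξ₂,X₀,X₁,X₂] define Eᵢ := Σⱼ ξⱼ·∂²D/∂Xⱼ∂Xᵢ for i = 0,1,2, and let M(ξ,X) be the determinant of the 3×3 matrix with rows (ξ₀, ξ₂, ξ₁), (X₀, X₂, X₁), (E₀, E₁, E₂). Then (∂²/∂X₀² + 2·∂²/∂X₁∂X₂) M(ξ,X) = 0 identically. (Here ∂₀² + 2∂₁∂₂ is the operator dual to the nonsingular conic θ = X₀² + 2X₁X₂, whose partial derivatives are proportional to the first two rows of the matrix.) -/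
open MvPolynomial

lemma pderiv_ofNat {σ R : Type*} [CommSemiring R] (i : σ) (n : ℕ) [n.AtLeastTwo] :
    pderiv i (no_index (OfNat.ofNat n) : MvPolynomial σ R) = 0 := by
  rw [← map_ofNat (C : R →+* MvPolynomial σ R) n, pderiv_C]

/-- `Eᵢ` as a function of `D`. -/
noncomputable def morleyE (k : Type*) [Field k] (i : Fin 3) (D : MvPolynomial (Fin 3) k) :
    MvPolynomial (Fin 3 ⊕ Fin 3) k :=
  ∑ j : Fin 3, X (Sum.inl j) *
    pderiv (Sum.inr j) (pderiv (Sum.inr i) (rename Sum.inr D))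

/-- The Morley determinant as a function of `D`. -/
noncomputable def morleyM (k : Type*) [Field k] (D : MvPolynomial (Fin 3) k) :
    MvPolynomial (Fin 3 ⊕ Fin 3) k :=
  Matrix.det (Matrix.of
    ![![X (Sum.inl 0), X (Sum.inl 2), X (Sum.inl 1)],
      ![X (Sum.inr 0), X (Sum.inr 2), X (Sum.inr 1)],
      ![morleyE k 0 D, morleyE k 1 D, morleyE k 2 D]])

/-- The full left-hand side as a function of `D`. -/
noncomputable def morleyOp (k : Type*) [Field k] (D : MvPolynomial (Fin 3) k) :
    MvPolynomial (Fin 3 ⊕ Fin 3) k :=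
  pderiv (Sum.inr (0 : Fin 3)) (pderiv (Sum.inr (0 : Fin 3)) (morleyM k D)) +
    2 * pderiv (Sum.inr (1 : Fin 3)) (pderiv (Sum.inr (2 : Fin 3)) (morleyM k D))

lemma morleyE_add (k : Type*) [Field k] (i : Fin 3) (p q : MvPolynomial (Fin 3) k) :
    morleyE k i (p + q) = morleyE k i p + morleyE k i q := by
  simp [morleyE, map_add, mul_add, Finset.sum_add_distrib]

lemma morleyE_C_mul (k : Type*) [Field k] (i : Fin 3) (r : k) (p : MvPolynomial (Fin 3) k) :
    morleyE k i (C r * p) = C r * morleyE k i p := by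
  simp only [morleyE, map_mul, rename_C, pderiv_C_mul, Finset.mul_sum]
  exact Finset.sum_congr rfl fun j _ => by ring

lemma morleyE_zero (k : Type*) [Field k] (i : Fin 3) : morleyE k i 0 = 0 := by
  simp [morleyE]

lemma morleyM_add (k : Type*) [Field k] (p q : MvPolynomial (Fin 3) k) :
    morleyM k (p + q) = morleyM k p + morleyM k q := by
  simp only [morleyM, Matrix.det_fin_three, Matrix.of_apply, Matrix.cons_val',
    Matrix.cons_val_zero, Matrix.cons_val_one, Matrix.head_cons, Matrix.head_fin_const,
    Matrix.cons_val_two, Matrix.tail_cons, Matrix.empty_val', Matrix.cons_val_fin_one,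
    morleyE_add]
  ring

lemma morleyM_C_mul (k : Type*) [Field k] (r : k) (p : MvPolynomial (Fin 3) k) :
    morleyM k (C r * p) = C r * morleyM k p := by
  simp only [morleyM, Matrix.det_fin_three, Matrix.of_apply, Matrix.cons_val',
    Matrix.cons_val_zero, Matrix.cons_val_one, Matrix.head_cons, Matrix.head_fin_const,
    Matrix.cons_val_two, Matrix.tail_cons, Matrix.empty_val', Matrix.cons_val_fin_one,
    morleyE_C_mul]
  ring

lemma morleyM_zero (k : Type*) [Field k] : morleyM k 0 = 0 := by
  simp only [morleyM, Matrix.det_fin_three, Matrix.of_apply, Matrix.cons_val',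
    Matrix.cons_val_zero, Matrix.cons_val_one, Matrix.head_cons, Matrix.head_fin_const,
    Matrix.cons_val_two, Matrix.tail_cons, Matrix.empty_val', Matrix.cons_val_fin_one,
    morleyE_zero]
  ring

lemma morleyOp_add (k : Type*) [Field k] (p q : MvPolynomial (Fin 3) k) :
    morleyOp k (p + q) = morleyOp k p + morleyOp k q := by
  simp only [morleyOp, morleyM_add, map_add]
  ring

lemma morleyOp_C_mul (k : Type*) [Field k] (r : k) (p : MvPolynomial (Fin 3) k) :
    morleyOp k (C r * p) = C r * morleyOp k p := by
  simp only [morleyOp, morleyM_C_mul, pderiv_C_mul]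
  ring

lemma morleyOp_zero (k : Type*) [Field k] : morleyOp k 0 = 0 := by
  simp [morleyOp, morleyM_zero]

lemma morleyOp_sum (k : Type*) [Field k] {ι : Type*} (s : Finset ι)
    (f : ι → MvPolynomial (Fin 3) k) :
    morleyOp k (∑ i ∈ s, f i) = ∑ i ∈ s, morleyOp k (f i) := by
  classical
  induction s using Finset.induction with
  | empty => simp [morleyOp_zero]
  | insert _ _ h ih => rw [Finset.sum_insert h, Finset.sum_insert h, morleyOp_add, ih]


set_option maxHeartbeats 2000000 in
lemma morley_key_003 (k : Type*) [Field k] :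
    morleyOp k (X 0 ^ 0 * X 1 ^ 0 * X 2 ^ 3) = 0 := by
  have e0 : morleyE k 0 (X 0 ^ 0 * X 1 ^ 0 * X 2 ^ 3 : MvPolynomial (Fin 3) k) =
      0 := by
    simp [morleyE, Fin.sum_univ_three, pderiv_mul, pderiv_pow, pderiv_X, pderiv_ofNat, Pi.single_apply]
    try ring
  have e1 : morleyE k 1 (X 0 ^ 0 * X 1 ^ 0 * X 2 ^ 3 : MvPolynomial (Fin 3) k) =
      0 := by
    simp [morleyE, Fin.sum_univ_three, pderiv_mul, pderiv_pow, pderiv_X, pderiv_ofNat, Pi.single_apply]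
    try ring
  have e2 : morleyE k 2 (X 0 ^ 0 * X 1 ^ 0 * X 2 ^ 3 : MvPolynomial (Fin 3) k) =
      (6 : MvPolynomial (Fin 3 ⊕ Fin 3) k) * X (Sum.inl 2) * X (Sum.inr 2) := by
    simp [morleyE, Fin.sum_univ_three, pderiv_mul, pderiv_pow, pderiv_X, pderiv_ofNat, Pi.single_apply]
    try ring
  rw [morleyOp, morleyM]
  simp only [Matrix.det_fin_three, Matrix.of_apply, Matrix.cons_val', Matrix.cons_val_zero,
    Matrix.cons_val_one, Matrix.head_cons, Matrix.head_fin_const, Matrix.cons_val_two,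
    Matrix.tail_cons, Matrix.empty_val', Matrix.cons_val_fin_one, e0, e1, e2]
  simp [pderiv_mul, pderiv_X, pderiv_ofNat, Pi.single_apply]
  try ring
  try exact Or.inr trivial

set_option maxHeartbeats 2000000 in
lemma morley_key_012 (k : Type*) [Field k] :
    morleyOp k (X 0 ^ 0 * X 1 ^ 1 * X 2 ^ 2) = 0 := by
  have e0 : morleyE k 0 (X 0 ^ 0 * X 1 ^ 1 * X 2 ^ 2 : MvPolynomial (Fin 3) k) =
      0 := by
    simp [morleyE, Fin.sum_univ_three, pderiv_mul, pderiv_pow, pderiv_X, pderiv_ofNat, Pi.single_apply]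
    try ring
  have e1 : morleyE k 1 (X 0 ^ 0 * X 1 ^ 1 * X 2 ^ 2 : MvPolynomial (Fin 3) k) =
      (2 : MvPolynomial (Fin 3 ⊕ Fin 3) k) * X (Sum.inl 2) * X (Sum.inr 2) := by
    simp [morleyE, Fin.sum_univ_three, pderiv_mul, pderiv_pow, pderiv_X, pderiv_ofNat, Pi.single_apply]
    try ring
  have e2 : morleyE k 2 (X 0 ^ 0 * X 1 ^ 1 * X 2 ^ 2 : MvPolynomial (Fin 3) k) =
      (2 : MvPolynomial (Fin 3 ⊕ Fin 3) k) * X (Sum.inl 1) * X (Sum.inr 2) + (2 : MvPolynomial (Fin 3 ⊕ Fin 3) k) * X (Sum.inl 2) * X (Sum.inr 1) := by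
    simp [morleyE, Fin.sum_univ_three, pderiv_mul, pderiv_pow, pderiv_X, pderiv_ofNat, Pi.single_apply]
    try ring
  rw [morleyOp, morleyM]
  simp only [Matrix.det_fin_three, Matrix.of_apply, Matrix.cons_val', Matrix.cons_val_zero,
    Matrix.cons_val_one, Matrix.head_cons, Matrix.head_fin_const, Matrix.cons_val_two,
    Matrix.tail_cons, Matrix.empty_val', Matrix.cons_val_fin_one, e0, e1, e2]
  simp [pderiv_mul, pderiv_X, pderiv_ofNat, Pi.single_apply]
  try ring
  try exact Or.inr trivial

set_option maxHeartbeats 2000000 in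
lemma morley_key_021 (k : Type*) [Field k] :
    morleyOp k (X 0 ^ 0 * X 1 ^ 2 * X 2 ^ 1) = 0 := by
  have e0 : morleyE k 0 (X 0 ^ 0 * X 1 ^ 2 * X 2 ^ 1 : MvPolynomial (Fin 3) k) =
      0 := by
    simp [morleyE, Fin.sum_univ_three, pderiv_mul, pderiv_pow, pderiv_X, pderiv_ofNat, Pi.single_apply]
    try ring
  have e1 : morleyE k 1 (X 0 ^ 0 * X 1 ^ 2 * X 2 ^ 1 : MvPolynomial (Fin 3) k) =
      (2 : MvPolynomial (Fin 3 ⊕ Fin 3) k) * X (Sum.inl 1) * X (Sum.inr 2) + (2 : MvPolynomial (Fin 3 ⊕ Fin 3) k) * X (Sum.inl 2) * X (Sum.inr 1) := by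
    simp [morleyE, Fin.sum_univ_three, pderiv_mul, pderiv_pow, pderiv_X, pderiv_ofNat, Pi.single_apply]
    try ring
  have e2 : morleyE k 2 (X 0 ^ 0 * X 1 ^ 2 * X 2 ^ 1 : MvPolynomial (Fin 3) k) =
      (2 : MvPolynomial (Fin 3 ⊕ Fin 3) k) * X (Sum.inl 1) * X (Sum.inr 1) := by
    simp [morleyE, Fin.sum_univ_three, pderiv_mul, pderiv_pow, pderiv_X, pderiv_ofNat, Pi.single_apply]
    try ring
  rw [morleyOp, morleyM]
  simp only [Matrix.det_fin_three, Matrix.of_apply, Matrix.cons_val', Matrix.cons_val_zero,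
    Matrix.cons_val_one, Matrix.head_cons, Matrix.head_fin_const, Matrix.cons_val_two,
    Matrix.tail_cons, Matrix.empty_val', Matrix.cons_val_fin_one, e0, e1, e2]
  simp [pderiv_mul, pderiv_X, pderiv_ofNat, Pi.single_apply]
  try ring
  try exact Or.inr trivial

set_option maxHeartbeats 2000000 in
lemma morley_key_030 (k : Type*) [Field k] :
    morleyOp k (X 0 ^ 0 * X 1 ^ 3 * X 2 ^ 0) = 0 := by
  have e0 : morleyE k 0 (X 0 ^ 0 * X 1 ^ 3 * X 2 ^ 0 : MvPolynomial (Fin 3) k) =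
      0 := by
    simp [morleyE, Fin.sum_univ_three, pderiv_mul, pderiv_pow, pderiv_X, pderiv_ofNat, Pi.single_apply]
    try ring
  have e1 : morleyE k 1 (X 0 ^ 0 * X 1 ^ 3 * X 2 ^ 0 : MvPolynomial (Fin 3) k) =
      (6 : MvPolynomial (Fin 3 ⊕ Fin 3) k) * X (Sum.inl 1) * X (Sum.inr 1) := by
    simp [morleyE, Fin.sum_univ_three, pderiv_mul, pderiv_pow, pderiv_X, pderiv_ofNat, Pi.single_apply]
    try ring
  have e2 : morleyE k 2 (X 0 ^ 0 * X 1 ^ 3 * X 2 ^ 0 : MvPolynomial (Fin 3) k) =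
      0 := by
    simp [morleyE, Fin.sum_univ_three, pderiv_mul, pderiv_pow, pderiv_X, pderiv_ofNat, Pi.single_apply]
    try ring
  rw [morleyOp, morleyM]
  simp only [Matrix.det_fin_three, Matrix.of_apply, Matrix.cons_val', Matrix.cons_val_zero,
    Matrix.cons_val_one, Matrix.head_cons, Matrix.head_fin_const, Matrix.cons_val_two,
    Matrix.tail_cons, Matrix.empty_val', Matrix.cons_val_fin_one, e0, e1, e2]
  simp [pderiv_mul, pderiv_X, pderiv_ofNat, Pi.single_apply]
  try ring
  try exact Or.inr trivial

set_option maxHeartbeats 2000000 in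
lemma morley_key_102 (k : Type*) [Field k] :
    morleyOp k (X 0 ^ 1 * X 1 ^ 0 * X 2 ^ 2) = 0 := by
  have e0 : morleyE k 0 (X 0 ^ 1 * X 1 ^ 0 * X 2 ^ 2 : MvPolynomial (Fin 3) k) =
      (2 : MvPolynomial (Fin 3 ⊕ Fin 3) k) * X (Sum.inl 2) * X (Sum.inr 2) := by
    simp [morleyE, Fin.sum_univ_three, pderiv_mul, pderiv_pow, pderiv_X, pderiv_ofNat, Pi.single_apply]
    try ring
  have e1 : morleyE k 1 (X 0 ^ 1 * X 1 ^ 0 * X 2 ^ 2 : MvPolynomial (Fin 3) k) =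
      0 := by
    simp [morleyE, Fin.sum_univ_three, pderiv_mul, pderiv_pow, pderiv_X, pderiv_ofNat, Pi.single_apply]
    try ring
  have e2 : morleyE k 2 (X 0 ^ 1 * X 1 ^ 0 * X 2 ^ 2 : MvPolynomial (Fin 3) k) =
      (2 : MvPolynomial (Fin 3 ⊕ Fin 3) k) * X (Sum.inl 0) * X (Sum.inr 2) + (2 : MvPolynomial (Fin 3 ⊕ Fin 3) k) * X (Sum.inl 2) * X (Sum.inr 0) := by
    simp [morleyE, Fin.sum_univ_three, pderiv_mul, pderiv_pow, pderiv_X, pderiv_ofNat, Pi.single_apply]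
    try ring
  rw [morleyOp, morleyM]
  simp only [Matrix.det_fin_three, Matrix.of_apply, Matrix.cons_val', Matrix.cons_val_zero,
    Matrix.cons_val_one, Matrix.head_cons, Matrix.head_fin_const, Matrix.cons_val_two,
    Matrix.tail_cons, Matrix.empty_val', Matrix.cons_val_fin_one, e0, e1, e2]
  simp [pderiv_mul, pderiv_X, pderiv_ofNat, Pi.single_apply]
  try ring
  try exact Or.inr trivial

set_option maxHeartbeats 2000000 in
lemma morley_key_111 (k : Type*) [Field k] :
    morleyOp k (X 0 ^ 1 * X 1 ^ 1 * X 2 ^ 1) = 0 := by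
  have e0 : morleyE k 0 (X 0 ^ 1 * X 1 ^ 1 * X 2 ^ 1 : MvPolynomial (Fin 3) k) =
      X (Sum.inl 1) * X (Sum.inr 2) + X (Sum.inl 2) * X (Sum.inr 1) := by
    simp [morleyE, Fin.sum_univ_three, pderiv_mul, pderiv_pow, pderiv_X, pderiv_ofNat, Pi.single_apply]
    try ring
  have e1 : morleyE k 1 (X 0 ^ 1 * X 1 ^ 1 * X 2 ^ 1 : MvPolynomial (Fin 3) k) =
      X (Sum.inl 0) * X (Sum.inr 2) + X (Sum.inl 2) * X (Sum.inr 0) := by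
    simp [morleyE, Fin.sum_univ_three, pderiv_mul, pderiv_pow, pderiv_X, pderiv_ofNat, Pi.single_apply]
    try ring
  have e2 : morleyE k 2 (X 0 ^ 1 * X 1 ^ 1 * X 2 ^ 1 : MvPolynomial (Fin 3) k) =
      X (Sum.inl 0) * X (Sum.inr 1) + X (Sum.inl 1) * X (Sum.inr 0) := by
    simp [morleyE, Fin.sum_univ_three, pderiv_mul, pderiv_pow, pderiv_X, pderiv_ofNat, Pi.single_apply]
    try ring
  rw [morleyOp, morleyM]
  simp only [Matrix.det_fin_three, Matrix.of_apply, Matrix.cons_val', Matrix.cons_val_zero,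
    Matrix.cons_val_one, Matrix.head_cons, Matrix.head_fin_const, Matrix.cons_val_two,
    Matrix.tail_cons, Matrix.empty_val', Matrix.cons_val_fin_one, e0, e1, e2]
  simp [pderiv_mul, pderiv_X, pderiv_ofNat, Pi.single_apply]
  try ring
  try exact Or.inr trivial

set_option maxHeartbeats 2000000 in
lemma morley_key_120 (k : Type*) [Field k] :
    morleyOp k (X 0 ^ 1 * X 1 ^ 2 * X 2 ^ 0) = 0 := by
  have e0 : morleyE k 0 (X 0 ^ 1 * X 1 ^ 2 * X 2 ^ 0 : MvPolynomial (Fin 3) k) =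
      (2 : MvPolynomial (Fin 3 ⊕ Fin 3) k) * X (Sum.inl 1) * X (Sum.inr 1) := by
    simp [morleyE, Fin.sum_univ_three, pderiv_mul, pderiv_pow, pderiv_X, pderiv_ofNat, Pi.single_apply]
    try ring
  have e1 : morleyE k 1 (X 0 ^ 1 * X 1 ^ 2 * X 2 ^ 0 : MvPolynomial (Fin 3) k) =
      (2 : MvPolynomial (Fin 3 ⊕ Fin 3) k) * X (Sum.inl 0) * X (Sum.inr 1) + (2 : MvPolynomial (Fin 3 ⊕ Fin 3) k) * X (Sum.inl 1) * X (Sum.inr 0) := by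
    simp [morleyE, Fin.sum_univ_three, pderiv_mul, pderiv_pow, pderiv_X, pderiv_ofNat, Pi.single_apply]
    try ring
  have e2 : morleyE k 2 (X 0 ^ 1 * X 1 ^ 2 * X 2 ^ 0 : MvPolynomial (Fin 3) k) =
      0 := by
    simp [morleyE, Fin.sum_univ_three, pderiv_mul, pderiv_pow, pderiv_X, pderiv_ofNat, Pi.single_apply]
    try ring
  rw [morleyOp, morleyM]
  simp only [Matrix.det_fin_three, Matrix.of_apply, Matrix.cons_val', Matrix.cons_val_zero,
    Matrix.cons_val_one, Matrix.head_cons, Matrix.head_fin_const, Matrix.cons_val_two,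
    Matrix.tail_cons, Matrix.empty_val', Matrix.cons_val_fin_one, e0, e1, e2]
  simp [pderiv_mul, pderiv_X, pderiv_ofNat, Pi.single_apply]
  try ring
  try exact Or.inr trivial

set_option maxHeartbeats 2000000 in
lemma morley_key_201 (k : Type*) [Field k] :
    morleyOp k (X 0 ^ 2 * X 1 ^ 0 * X 2 ^ 1) = 0 := by
  have e0 : morleyE k 0 (X 0 ^ 2 * X 1 ^ 0 * X 2 ^ 1 : MvPolynomial (Fin 3) k) =
      (2 : MvPolynomial (Fin 3 ⊕ Fin 3) k) * X (Sum.inl 0) * X (Sum.inr 2) + (2 : MvPolynomial (Fin 3 ⊕ Fin 3) k) * X (Sum.inl 2) * X (Sum.inr 0) := by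
    simp [morleyE, Fin.sum_univ_three, pderiv_mul, pderiv_pow, pderiv_X, pderiv_ofNat, Pi.single_apply]
    try ring
  have e1 : morleyE k 1 (X 0 ^ 2 * X 1 ^ 0 * X 2 ^ 1 : MvPolynomial (Fin 3) k) =
      0 := by
    simp [morleyE, Fin.sum_univ_three, pderiv_mul, pderiv_pow, pderiv_X, pderiv_ofNat, Pi.single_apply]
    try ring
  have e2 : morleyE k 2 (X 0 ^ 2 * X 1 ^ 0 * X 2 ^ 1 : MvPolynomial (Fin 3) k) =
      (2 : MvPolynomial (Fin 3 ⊕ Fin 3) k) * X (Sum.inl 0) * X (Sum.inr 0) := by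
    simp [morleyE, Fin.sum_univ_three, pderiv_mul, pderiv_pow, pderiv_X, pderiv_ofNat, Pi.single_apply]
    try ring
  rw [morleyOp, morleyM]
  simp only [Matrix.det_fin_three, Matrix.of_apply, Matrix.cons_val', Matrix.cons_val_zero,
    Matrix.cons_val_one, Matrix.head_cons, Matrix.head_fin_const, Matrix.cons_val_two,
    Matrix.tail_cons, Matrix.empty_val', Matrix.cons_val_fin_one, e0, e1, e2]
  simp [pderiv_mul, pderiv_X, pderiv_ofNat, Pi.single_apply]
  try ring
  try exact Or.inr trivial

set_option maxHeartbeats 2000000 in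
lemma morley_key_210 (k : Type*) [Field k] :
    morleyOp k (X 0 ^ 2 * X 1 ^ 1 * X 2 ^ 0) = 0 := by
  have e0 : morleyE k 0 (X 0 ^ 2 * X 1 ^ 1 * X 2 ^ 0 : MvPolynomial (Fin 3) k) =
      (2 : MvPolynomial (Fin 3 ⊕ Fin 3) k) * X (Sum.inl 0) * X (Sum.inr 1) + (2 : MvPolynomial (Fin 3 ⊕ Fin 3) k) * X (Sum.inl 1) * X (Sum.inr 0) := by
    simp [morleyE, Fin.sum_univ_three, pderiv_mul, pderiv_pow, pderiv_X, pderiv_ofNat, Pi.single_apply]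
    try ring
  have e1 : morleyE k 1 (X 0 ^ 2 * X 1 ^ 1 * X 2 ^ 0 : MvPolynomial (Fin 3) k) =
      (2 : MvPolynomial (Fin 3 ⊕ Fin 3) k) * X (Sum.inl 0) * X (Sum.inr 0) := by
    simp [morleyE, Fin.sum_univ_three, pderiv_mul, pderiv_pow, pderiv_X, pderiv_ofNat, Pi.single_apply]
    try ring
  have e2 : morleyE k 2 (X 0 ^ 2 * X 1 ^ 1 * X 2 ^ 0 : MvPolynomial (Fin 3) k) =
      0 := by
    simp [morleyE, Fin.sum_univ_three, pderiv_mul, pderiv_pow, pderiv_X, pderiv_ofNat, Pi.single_apply]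
    try ring
  rw [morleyOp, morleyM]
  simp only [Matrix.det_fin_three, Matrix.of_apply, Matrix.cons_val', Matrix.cons_val_zero,
    Matrix.cons_val_one, Matrix.head_cons, Matrix.head_fin_const, Matrix.cons_val_two,
    Matrix.tail_cons, Matrix.empty_val', Matrix.cons_val_fin_one, e0, e1, e2]
  simp [pderiv_mul, pderiv_X, pderiv_ofNat, Pi.single_apply]
  try ring
  try exact Or.inr trivial

set_option maxHeartbeats 2000000 in
lemma morley_key_300 (k : Type*) [Field k] :
    morleyOp k (X 0 ^ 3 * X 1 ^ 0 * X 2 ^ 0) = 0 := by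
  have e0 : morleyE k 0 (X 0 ^ 3 * X 1 ^ 0 * X 2 ^ 0 : MvPolynomial (Fin 3) k) =
      (6 : MvPolynomial (Fin 3 ⊕ Fin 3) k) * X (Sum.inl 0) * X (Sum.inr 0) := by
    simp [morleyE, Fin.sum_univ_three, pderiv_mul, pderiv_pow, pderiv_X, pderiv_ofNat, Pi.single_apply]
    try ring
  have e1 : morleyE k 1 (X 0 ^ 3 * X 1 ^ 0 * X 2 ^ 0 : MvPolynomial (Fin 3) k) =
      0 := by
    simp [morleyE, Fin.sum_univ_three, pderiv_mul, pderiv_pow, pderiv_X, pderiv_ofNat, Pi.single_apply]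
    try ring
  have e2 : morleyE k 2 (X 0 ^ 3 * X 1 ^ 0 * X 2 ^ 0 : MvPolynomial (Fin 3) k) =
      0 := by
    simp [morleyE, Fin.sum_univ_three, pderiv_mul, pderiv_pow, pderiv_X, pderiv_ofNat, Pi.single_apply]
    try ring
  rw [morleyOp, morleyM]
  simp only [Matrix.det_fin_three, Matrix.of_apply, Matrix.cons_val', Matrix.cons_val_zero,
    Matrix.cons_val_one, Matrix.head_cons, Matrix.head_fin_const, Matrix.cons_val_two,
    Matrix.tail_cons, Matrix.empty_val', Matrix.cons_val_fin_one, e0, e1, e2]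
  simp [pderiv_mul, pderiv_X, pderiv_ofNat, Pi.single_apply]
  try ring
  try exact Or.inr trivial

attribute [local irreducible] morleyOp morleyM morleyE in
set_option maxHeartbeats 1000000 in
lemma morley_key (k : Type*) [Field k] (a b c : ℕ) (h : a + b + c = 3) :
    morleyOp k (X 0 ^ a * X 1 ^ b * X 2 ^ c) = 0 := by
  have ha : a ≤ 3 := by omega
  have hb : b ≤ 3 := by omega
  have hc : c ≤ 3 := by omega
  interval_cases a <;> interval_cases b <;> interval_cases c <;>
    first | omega | with_reducible exact morley_key_003 k | with_reducible exact morley_key_012 k | with_reducible exact morley_key_021 k | with_reducible exact morley_key_030 k | with_reducible exact morley_key_102 k | with_reducible exact morley_key_111 k | with_reducible exact morley_key_120 k | with_reducible exact morley_key_201 k | with_reducible exact morley_key_210 k | with_reducible exact morley_key_300 k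

/-- **Morley's differential identity.**  Work in `k[ξ₀,ξ₁,ξ₂,X₀,X₁,X₂]`, where the `ξ`
variables are indexed by `Sum.inl` and the `X` variables by `Sum.inr`.  For a homogeneous
cubic `D` in the `X` variables set `Eᵢ = Σⱼ ξⱼ ∂²D/∂Xⱼ∂Xᵢ` and let `M(ξ,X)` be the
determinant of the matrix with rows `(ξ₀,ξ₂,ξ₁)`, `(X₀,X₂,X₁)`, `(E₀,E₁,E₂)`.  Then
`(∂²/∂X₀² + 2 ∂²/∂X₁∂X₂) M = 0`. -/
theorem morley_differential_identity (k : Type*) [Field k] [CharZero k]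
    (D : MvPolynomial (Fin 3) k) (hD : D.IsHomogeneous 3) :
    let ξv : Fin 3 → MvPolynomial (Fin 3 ⊕ Fin 3) k := fun j => X (Sum.inl j)
    let Xv : Fin 3 → MvPolynomial (Fin 3 ⊕ Fin 3) k := fun j => X (Sum.inr j)
    let Dx : MvPolynomial (Fin 3 ⊕ Fin 3) k := rename Sum.inr D
    let E : Fin 3 → MvPolynomial (Fin 3 ⊕ Fin 3) k := fun i =>
      ∑ j : Fin 3, ξv j * pderiv (Sum.inr j) (pderiv (Sum.inr i) Dx)
    let M : MvPolynomial (Fin 3 ⊕ Fin 3) k :=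
      Matrix.det (Matrix.of
        ![![ξv 0, ξv 2, ξv 1], ![Xv 0, Xv 2, Xv 1], ![E 0, E 1, E 2]])
    pderiv (Sum.inr (0 : Fin 3)) (pderiv (Sum.inr (0 : Fin 3)) M) +
      2 * pderiv (Sum.inr (1 : Fin 3)) (pderiv (Sum.inr (2 : Fin 3)) M) = 0 := by
  show morleyOp k D = 0
  conv_lhs => rw [D.as_sum]
  rw [morleyOp_sum]
  refine Finset.sum_eq_zero fun v hv => ?_
  have h3 : Finsupp.weight 1 v = 3 := hD (mem_support_iff.mp hv)
  have hsum : v 0 + v 1 + v 2 = 3 := by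
    simpa [Finsupp.weight_apply, Finsupp.sum_fintype, Fin.sum_univ_three] using h3
  have hmono : monomial v (coeff v D) =
      C (coeff v D) * (X 0 ^ v 0 * X 1 ^ v 1 * X 2 ^ v 2) := by
    rw [monomial_eq, Finsupp.prod_fintype _ _ (fun i => pow_zero _), Fin.prod_univ_three]
  rw [hmono, morleyOp_C_mul, morley_key k _ _ _ hsum, mul_zero]
end

section
/- In the space of homogeneous quadratic forms in k[X₀,X₁,X₂], the k-linear span of the set of forms { (ξ₀X₀ + ξ₁X₂ + ξ₂X₁)·(ξ₁X₂ − ξ₂X₁) : ξ = (ξ₀,ξ₁,ξ₂) ∈ k³ } is exactly the subspace of quadratic forms whose coefficient of X₀² and coefficient of X₁X₂ both vanish; in particular this span has dimension 4. -/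
open MvPolynomial

open MvPolynomial

noncomputable section MorleyAux

namespace MorleyAux

def D : Fin 4 → (Fin 3 →₀ ℕ) :=
  ![Finsupp.single 0 1 + Finsupp.single 2 1, Finsupp.single 0 1 + Finsupp.single 1 1,
    Finsupp.single 2 2, Finsupp.single 1 2]

lemma D_inj : Function.Injective D := by
  intro i j h
  fin_cases i <;> fin_cases j <;>
    first
      | rfl
      | (exfalso; rw [DFunLike.ext_iff] at h;
         simp only [D, Matrix.cons_val_zero, Matrix.cons_val_one, Matrix.head_cons,
           Matrix.cons_val_two, Matrix.tail_cons, Matrix.cons_val_three] at h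
         first
           | simpa using h 0
           | simpa using h 1
           | simpa using h 2)

lemma fin3_rep (d : Fin 3 →₀ ℕ) :
    d = Finsupp.single 0 (d 0) + Finsupp.single 1 (d 1) + Finsupp.single 2 (d 2) := by
  ext i; fin_cases i <;> simp [Finsupp.single_apply]

lemma fin3_deg2 (d : Fin 3 →₀ ℕ) (h : d 0 + d 1 + d 2 = 2) :
    d = Finsupp.single 0 2 ∨ d = Finsupp.single 1 1 + Finsupp.single 2 1 ∨
    d = D 0 ∨ d = D 1 ∨ d = D 2 ∨ d = D 3 := by
  have hd := fin3_rep d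
  obtain ⟨a, b, c, ha, hb, hc⟩ : ∃ a b c, d 0 = a ∧ d 1 = b ∧ d 2 = c := ⟨_, _, _, rfl, rfl, rfl⟩
  rw [ha, hb, hc] at hd h
  have hA : a ≤ 2 := by omega
  have hB : b ≤ 2 := by omega
  have hC : c ≤ 2 := by omega
  interval_cases a <;> interval_cases b <;> interval_cases c <;> simp_all [D]

lemma deg3 (d : Fin 3 →₀ ℕ) : d.degree = d 0 + d 1 + d 2 := by
  rw [Finsupp.degree_apply, Finset.sum_subset (Finset.subset_univ _)
    (fun i _ hi => Finsupp.notMem_support_iff.1 hi), Fin.sum_univ_three]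

lemma D_degree (i : Fin 4) : (D i).degree = 2 := by
  fin_cases i <;> simp [deg3, D, Finsupp.single_apply]

variable (k : Type*) [Field k]

def v : Fin 4 → MvPolynomial (Fin 3) k := fun i => monomial (D i) 1

lemma v0 : v k 0 = X 0 * X 2 := by simp [v, D, X, monomial_mul]
lemma v1 : v k 1 = X 0 * X 1 := by simp [v, D, X, monomial_mul]
lemma v2 : v k 2 = X 2 * X 2 := by
  simp [v, D, X, monomial_mul]; rw [← Finsupp.single_add]
lemma v3 : v k 3 = X 1 * X 1 := by
  simp [v, D, X, monomial_mul]; rw [← Finsupp.single_add]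

lemma v_linindep : LinearIndependent k (v k) := by
  have := (basisMonomials (Fin 3) k).linearIndependent
  have h2 := this.comp D D_inj
  exact h2

def W : Submodule k (MvPolynomial (Fin 3) k) :=
  homogeneousSubmodule (Fin 3) k 2 ⊓
    LinearMap.ker (lcoeff k (Finsupp.single (0 : Fin 3) 2)) ⊓
    LinearMap.ker (lcoeff k (Finsupp.single (1 : Fin 3) 1 + Finsupp.single (2 : Fin 3) 1))

lemma mem_W (q : MvPolynomial (Fin 3) k) :
    q ∈ W k ↔ q.IsHomogeneous 2 ∧ coeff (Finsupp.single (0 : Fin 3) 2) q = 0 ∧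
      coeff (Finsupp.single (1 : Fin 3) 1 + Finsupp.single (2 : Fin 3) 1) q = 0 := by
  simp [W, mem_homogeneousSubmodule, LinearMap.mem_ker, lcoeff_apply, and_assoc]

lemma v_mem_W (i : Fin 4) : v k i ∈ W k := by
  rw [mem_W]
  refine ⟨isHomogeneous_monomial 1 (D_degree i), ?_, ?_⟩ <;>
  · rw [v, coeff_monomial, if_neg]
    intro h
    rw [DFunLike.ext_iff] at h
    fin_cases i <;>
      simp only [D, Matrix.cons_val_zero, Matrix.cons_val_one, Matrix.head_cons,
        Matrix.cons_val_two, Matrix.tail_cons, Matrix.cons_val_three] at h <;>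
      first
        | simpa using h 0
        | simpa using h 1
        | simpa using h 2

lemma mono_mem (i : Fin 4) (c : k) :
    monomial (D i) c ∈ Submodule.span k (Set.range (v k)) := by
  have h : (monomial (D i) c : MvPolynomial (Fin 3) k) = c • v k i := by
    rw [v, smul_monomial, smul_eq_mul, mul_one]
  rw [h]
  exact Submodule.smul_mem _ _ (Submodule.subset_span ⟨i, rfl⟩)

lemma mem_span_v (q : MvPolynomial (Fin 3) k) (hq : q ∈ W k) :
    q ∈ Submodule.span k (Set.range (v k)) := by
  rw [mem_W] at hq
  obtain ⟨hh, h1, h2⟩ := hq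
  rw [q.as_sum]
  refine Submodule.sum_mem _ fun d hd => ?_
  have hdeg : d 0 + d 1 + d 2 = 2 := by
    have := hh (mem_support_iff.1 hd)
    rwa [Pi.one_def, ← Finsupp.degree_eq_weight_one, deg3] at this
  rcases fin3_deg2 d hdeg with h | h | h | h | h | h
  · rw [h, h1, monomial_zero]; exact Submodule.zero_mem _
  · rw [h, h2, monomial_zero]; exact Submodule.zero_mem _
  · rw [h]; exact mono_mem k 0 _
  · rw [h]; exact mono_mem k 1 _
  · rw [h]; exact mono_mem k 2 _
  · rw [h]; exact mono_mem k 3 _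

lemma S_mem_span (ξ : Fin 3 → k) :
    (C (ξ 0) * X 0 + C (ξ 1) * X 2 + C (ξ 2) * X 1) * (C (ξ 1) * X 2 - C (ξ 2) * X 1)
      ∈ Submodule.span k (Set.range (v k)) := by
  have hexp : (C (ξ 0) * X 0 + C (ξ 1) * X 2 + C (ξ 2) * X 1) * (C (ξ 1) * X 2 - C (ξ 2) * X 1)
      = (ξ 0 * ξ 1) • v k 0 + (-(ξ 0 * ξ 2)) • v k 1 + (ξ 1 * ξ 1) • v k 2 +
        (-(ξ 2 * ξ 2)) • v k 3 := by
    rw [v0, v1, v2, v3]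
    simp only [smul_eq_C_mul, map_mul, map_neg]
    ring
  rw [hexp]
  have m : ∀ i : Fin 4, v k i ∈ Submodule.span k (Set.range (v k)) :=
    fun i => Submodule.subset_span ⟨i, rfl⟩
  exact add_mem (add_mem (add_mem (Submodule.smul_mem _ _ (m 0)) (Submodule.smul_mem _ _ (m 1)))
    (Submodule.smul_mem _ _ (m 2))) (Submodule.smul_mem _ _ (m 3))

end MorleyAux
end MorleyAux

open MorleyAux

/-- The span of the quadratic forms `(ξ₀X₀+ξ₁X₂+ξ₂X₁)(ξ₁X₂−ξ₂X₁)`, as `ξ` ranges over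
`k³`, is exactly the space of quadratic forms whose coefficients of `X₀²` and of `X₁X₂`
vanish; in particular it has dimension 4. -/
theorem span_of_morley_conics (k : Type*) [Field k] [CharZero k] :
    let S : Set (MvPolynomial (Fin 3) k) :=
      {q | ∃ ξ : Fin 3 → k,
        q = (MvPolynomial.C (ξ 0) * X 0 + MvPolynomial.C (ξ 1) * X 2 +
              MvPolynomial.C (ξ 2) * X 1) *
            (MvPolynomial.C (ξ 1) * X 2 - MvPolynomial.C (ξ 2) * X 1)}
    (∀ q : MvPolynomial (Fin 3) k,
      q ∈ Submodule.span k S ↔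
        q.IsHomogeneous 2 ∧ coeff (Finsupp.single (0 : Fin 3) 2) q = 0 ∧
          coeff (Finsupp.single (1 : Fin 3) 1 + Finsupp.single (2 : Fin 3) 1) q = 0) ∧
    Module.rank k ↥(Submodule.span k S) = 4 := by
  intro S
  have hp : ∀ a b c : k,
      (C a * X 0 + C b * X 2 + C c * X 1) * (C b * X 2 - C c * X 1) ∈ Submodule.span k S := by
    intro a b c
    exact Submodule.subset_span ⟨![a, b, c], by simp⟩
  have hSv : Submodule.span k S = Submodule.span k (Set.range (v k)) := by
    apply le_antisymm
    · rw [Submodule.span_le]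
      rintro q ⟨ξ, rfl⟩
      exact S_mem_span k ξ
    · rw [Submodule.span_le]
      rintro q ⟨i, rfl⟩
      have m0 : v k 0 ∈ Submodule.span k S := by
        rw [v0]
        have heq : (X 0 : MvPolynomial (Fin 3) k) * X 2 =
            (C 1 * X 0 + C 1 * X 2 + C 0 * X 1) * (C 1 * X 2 - C 0 * X 1)
            - (C 0 * X 0 + C 1 * X 2 + C 0 * X 1) * (C 1 * X 2 - C 0 * X 1) := by
          simp only [map_one, map_zero]; ring
        rw [heq]; exact sub_mem (hp 1 1 0) (hp 0 1 0)
      have m1 : v k 1 ∈ Submodule.span k S := by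
        rw [v1]
        have heq : (X 0 : MvPolynomial (Fin 3) k) * X 1 =
            (C 0 * X 0 + C 0 * X 2 + C 1 * X 1) * (C 0 * X 2 - C 1 * X 1)
            - (C 1 * X 0 + C 0 * X 2 + C 1 * X 1) * (C 0 * X 2 - C 1 * X 1) := by
          simp only [map_one, map_zero]; ring
        rw [heq]; exact sub_mem (hp 0 0 1) (hp 1 0 1)
      have m2 : v k 2 ∈ Submodule.span k S := by
        rw [v2]
        have heq : (X 2 : MvPolynomial (Fin 3) k) * X 2 =
            (C 0 * X 0 + C 1 * X 2 + C 0 * X 1) * (C 1 * X 2 - C 0 * X 1) := by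
          simp only [map_one, map_zero]; ring
        rw [heq]; exact hp 0 1 0
      have m3 : v k 3 ∈ Submodule.span k S := by
        rw [v3]
        have heq : (X 1 : MvPolynomial (Fin 3) k) * X 1 =
            - ((C 0 * X 0 + C 0 * X 2 + C 1 * X 1) * (C 0 * X 2 - C 1 * X 1)) := by
          simp only [map_one, map_zero]; ring
        rw [heq]; exact neg_mem (hp 0 0 1)
      fin_cases i
      · exact m0
      · exact m1
      · exact m2
      · exact m3
  constructor
  · intro q
    rw [hSv]
    constructor
    · intro hq
      have hle : Submodule.span k (Set.range (v k)) ≤ W k :=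
        Submodule.span_le.2 (by rintro x ⟨i, rfl⟩; exact v_mem_W k i)
      exact (mem_W k q).1 (hle hq)
    · rintro ⟨hh, h1, h2⟩
      exact mem_span_v k q ((mem_W k q).2 ⟨hh, h1, h2⟩)
  · rw [hSv, rank_span (v_linindep k)]
    simpa using Cardinal.mk_range_eq_of_injective (v_linindep k).injective
end
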